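/- arXiv:2102.12352 — 5 statements merged into one kernel-verified Lean document; each statement's English description precedes it below -/
import Mathlib

section
/- Let S ⊆ ℝⁿ and let μ be a Borel probability measure on ℝⁿ whose support is contained in S. If the expectation E_μ[X] exists (each coordinate integral is finite), then E_μ[X] belongs to the convex hull of S. -/
open MeasureTheory Set Filter Topology
open scoped BigOperators ENNReal

noncomputable section

/-- The support of a measure: points all of whose open neighborhoods have
positive measure. -/
def msupport {E : Type*} [TopologicalSpace E] [MeasurableSpace E]
    (μ : Measure E) : Set E :=
  {x | ∀ U : Set E, IsOpen U → x ∈ U → μ U ≠ 0}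


variable {E : Type*} [TopologicalSpace E] [MeasurableSpace E]

theorem isClosed_msupport (μ : Measure E) : IsClosed (msupport μ) := by
  rw [← isOpen_compl_iff]
  refine isOpen_iff_forall_mem_open.2 ?_
  intro x hx
  simp only [msupport, mem_compl_iff, mem_setOf_eq, not_forall] at hx
  obtain ⟨U, hU, hxU, hμU⟩ := hx
  push_neg at hμU
  refine ⟨U, fun y hy hyall => ?_, hU, hxU⟩
  exact hyall U hU hy hμU

theorem msupport_compl_null [SecondCountableTopology E] (μ : Measure E) :
    μ (msupport μ)ᶜ = 0 := by
  obtain ⟨T, hTc, hTsub, hTU⟩ :=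
    TopologicalSpace.isOpen_sUnion_countable {U : Set E | IsOpen U ∧ μ U = 0}
      (fun s hs => hs.1)
  have hcompl : (msupport μ)ᶜ = ⋃₀ {U : Set E | IsOpen U ∧ μ U = 0} := by
    ext x
    simp only [msupport, mem_compl_iff, mem_setOf_eq, not_forall, mem_sUnion]
    constructor
    · rintro ⟨U, hU, hxU, hμU⟩
      push_neg at hμU
      exact ⟨U, ⟨hU, hμU⟩, hxU⟩
    · rintro ⟨U, ⟨hU, hμU⟩, hxU⟩
      exact ⟨U, hU, hxU, by simp [hμU]⟩
  rw [hcompl, ← hTU]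
  exact (measure_sUnion_null_iff hTc).2 fun s hs => (hTsub hs).2

theorem msupport_subset_of_null {F : Set E} (μ : Measure E) (hF : IsClosed F)
    (h : μ Fᶜ = 0) : msupport μ ⊆ F := by
  intro x hx
  by_contra hxF
  exact hx Fᶜ hF.isOpen_compl hxF h

theorem ae_mem_msupport [SecondCountableTopology E] (μ : Measure E) :
    ∀ᵐ x ∂μ, x ∈ msupport μ := by
  rw [ae_iff]
  exact msupport_compl_null μ

theorem msupport_nonempty [SecondCountableTopology E] (μ : Measure E)
    [IsProbabilityMeasure μ] : (msupport μ).Nonempty := by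
  by_contra h
  rw [not_nonempty_iff_eq_empty] at h
  have := msupport_compl_null μ
  rw [h, compl_empty] at this
  simp [measure_univ] at this

theorem integrable_linearMap {m : ℕ} (μ : Measure (Fin m → ℝ)) [IsProbabilityMeasure μ]
    (hint : ∀ i, Integrable (fun x => x i) μ) (f : (Fin m → ℝ) →ₗ[ℝ] ℝ) :
    Integrable (fun x => f x) μ := by
  have : (fun x : Fin m → ℝ => f x)
      = fun x => ∑ i : Fin m, x i • f (fun j => if i = j then 1 else 0) := by
    funext x; exact LinearMap.pi_apply_eq_sum_univ f x
  rw [this]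
  exact integrable_finset_sum _ fun i _ => (hint i).smul_const _

theorem integral_linearMap {m : ℕ} (μ : Measure (Fin m → ℝ)) [IsProbabilityMeasure μ]
    (hint : ∀ i, Integrable (fun x => x i) μ) (f : (Fin m → ℝ) →ₗ[ℝ] ℝ) :
    ∫ x, f x ∂μ = f (fun i => ∫ x, x i ∂μ) := by
  have h1 : (fun x : Fin m → ℝ => f x)
      = fun x => ∑ i : Fin m, x i • f (fun j => if i = j then 1 else 0) := by
    funext x; exact LinearMap.pi_apply_eq_sum_univ f x
  rw [h1, integral_finset_sum _ fun i _ => (hint i).smul_const _,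
    LinearMap.pi_apply_eq_sum_univ f]
  congr 1
  funext i
  rw [integral_smul_const]

theorem msupport_subset_hyperplane {m : ℕ} (μ : Measure (Fin m → ℝ)) [IsProbabilityMeasure μ]
    (hint : ∀ i, Integrable (fun x => x i) μ) (f : (Fin m → ℝ) →ₗ[ℝ] ℝ)
    (hle : ∀ x ∈ msupport μ, f x ≤ f (fun i => ∫ x, x i ∂μ)) :
    msupport μ ⊆ {x | f x = f (fun i => ∫ x, x i ∂μ)} := by
  set b : Fin m → ℝ := fun i => ∫ x, x i ∂μ with hb
  have hfint : Integrable (fun x => f x) μ := integrable_linearMap μ hint f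
  have hgint : Integrable (fun x => f b - f x) μ := (integrable_const _).sub hfint
  have hgnn : 0 ≤ᵐ[μ] fun x => f b - f x := by
    filter_upwards [ae_mem_msupport μ] with x hx
    simpa using hle x hx
  have hgzero : ∫ x, (f b - f x) ∂μ = 0 := by
    rw [integral_sub (integrable_const _) hfint, integral_linearMap μ hint f,
      integral_const, probReal_univ]
    simp [hb]
  have hae : (fun x => f b - f x) =ᵐ[μ] 0 :=
    ((integral_eq_zero_iff_of_nonneg_ae hgnn hgint).1 hgzero)
  have hnull : μ {x | f x = f b}ᶜ = 0 := by
    rw [compl_setOf, ← ae_iff]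
    filter_upwards [hae] with x hx
    simp only [Pi.zero_apply] at hx
    linarith
  exact msupport_subset_of_null μ
    (isClosed_eq (f.continuous_of_finiteDimensional) continuous_const) hnull

theorem key_of_interior_nonempty {m : ℕ} (μ : Measure (Fin m → ℝ)) [IsProbabilityMeasure μ]
    (hint : ∀ i, Integrable (fun x => x i) μ)
    (hne : (interior (convexHull ℝ (msupport μ))).Nonempty) :
    (fun i => ∫ x, x i ∂μ) ∈ convexHull ℝ (msupport μ) := by
  set b : Fin m → ℝ := fun i => ∫ x, x i ∂μ with hbdef
  set C : Set (Fin m → ℝ) := convexHull ℝ (msupport μ) with hCdef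
  by_contra hb
  have hbint : b ∉ interior C := fun h => hb (interior_subset h)
  obtain ⟨f, hf⟩ := geometric_hahn_banach_open_point
    ((convex_convexHull ℝ (msupport μ)).interior) isOpen_interior hbint
  obtain ⟨a₀, ha₀⟩ := hne
  -- f ≤ f b on C
  have hle : ∀ x ∈ C, f x ≤ f b := by
    intro x hxC
    have h1 : ∀ t : ℝ, 0 < t → t ≤ 1 → (1 - t) * f x + t * f a₀ < f b := by
      intro t ht ht1
      have hmem : (1 - t) • x + t • a₀ ∈ interior C :=
        (convex_convexHull ℝ (msupport μ)).combo_closure_interior_mem_interior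
          (subset_closure hxC) ha₀ (by linarith) ht (by ring)
      have := hf _ hmem
      simpa [map_add, _root_.map_smul, smul_eq_mul] using this
    by_contra hlt
    push_neg at hlt
    have hfa₀ : f a₀ < f b := by simpa using h1 1 one_pos le_rfl
    have hd : 0 < f x - f a₀ := by linarith
    set t : ℝ := (f x - f b) / (f x - f a₀) with htdef
    have ht0 : 0 < t := div_pos (by linarith) hd
    have ht1 : t ≤ 1 := by rw [div_le_one hd]; linarith
    have h2 := h1 t ht0 ht1
    have h3 : t * f x - t * f a₀ = f x - f b := by
      rw [← mul_sub, htdef, div_mul_cancel₀ _ hd.ne']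
    linarith
  -- therefore the support lies in the hyperplane f = f b
  have hsub : msupport μ ⊆ {x | (f : (Fin m → ℝ) →ₗ[ℝ] ℝ) x = (f : (Fin m → ℝ) →ₗ[ℝ] ℝ) b} :=
    msupport_subset_hyperplane μ hint (f : (Fin m → ℝ) →ₗ[ℝ] ℝ)
      (fun x hx => hle x (subset_convexHull ℝ _ hx))
  have hCsub : C ⊆ {x | (f : (Fin m → ℝ) →ₗ[ℝ] ℝ) x = (f : (Fin m → ℝ) →ₗ[ℝ] ℝ) b} :=
    convexHull_min hsub (convex_hyperplane (f : (Fin m → ℝ) →ₗ[ℝ] ℝ).isLinear _)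
  have h4 : (f : (Fin m → ℝ) →ₗ[ℝ] ℝ) a₀ = (f : (Fin m → ℝ) →ₗ[ℝ] ℝ) b := hCsub (interior_subset ha₀)
  have h5 := hf a₀ ha₀
  simp only [ContinuousLinearMap.coe_coe] at h4
  rw [h4] at h5
  exact lt_irrefl _ h5

theorem key : ∀ {m : ℕ} (μ : Measure (Fin m → ℝ)), IsProbabilityMeasure μ →
    (∀ i, Integrable (fun x => x i) μ) →
    (fun i => ∫ x, x i ∂μ) ∈ convexHull ℝ (msupport μ) := by
  intro m
  induction m with
  | zero =>
    intro μ hprob _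
    haveI := hprob
    obtain ⟨x₀, hx₀⟩ := msupport_nonempty μ
    have h : (fun i => ∫ x, x i ∂μ) = x₀ := Subsingleton.elim _ _
    rw [h]
    exact subset_convexHull ℝ _ hx₀
  | succ n ih =>
    intro μ hprob hint
    haveI := hprob
    by_cases hne : (interior (convexHull ℝ (msupport μ))).Nonempty
    · exact key_of_interior_nonempty μ hint hne
    · -- the support lies in a proper affine subspace
      set b : Fin (n + 1) → ℝ := fun i => ∫ x, x i ∂μ with hbdef
      obtain ⟨x₀, hx₀⟩ := msupport_nonempty μ
      have hC : Convex ℝ (convexHull ℝ (msupport μ)) := convex_convexHull ℝ _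
      have hspan : affineSpan ℝ (convexHull ℝ (msupport μ)) ≠ ⊤ := by
        intro h
        exact hne ((hC.interior_nonempty_iff_affineSpan_eq_top).2 h)
      have hspanK : affineSpan ℝ (msupport μ) ≠ ⊤ := by
        rwa [affineSpan_convexHull] at hspan
      have hvs : vectorSpan ℝ (msupport μ) ≠ ⊤ := by
        intro h
        apply hspanK
        have hne' : ((affineSpan ℝ (msupport μ) :
            AffineSubspace ℝ (Fin (n + 1) → ℝ)) : Set (Fin (n + 1) → ℝ)).Nonempty :=
          ⟨x₀, subset_affineSpan ℝ _ hx₀⟩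
        rw [← AffineSubspace.direction_eq_top_iff_of_nonempty hne', direction_affineSpan]
        exact h
      -- a nonzero functional vanishing on the span of directions
      obtain ⟨f, hf0, hfker⟩ := Submodule.exists_dual_map_eq_bot_of_lt_top
        (lt_top_iff_ne_top.2 hvs) inferInstance
      have hker : ∀ v ∈ vectorSpan ℝ (msupport μ), f v = 0 := by
        intro v hv
        have h1 : f v ∈ (vectorSpan ℝ (msupport μ)).map f := Submodule.mem_map_of_mem hv
        rw [hfker] at h1
        simpa using h1
      set c : ℝ := f x₀ with hcdef
      have hKhyp : msupport μ ⊆ {x | f x = c} := by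
        intro x hx
        have hv : x - x₀ ∈ vectorSpan ℝ (msupport μ) := by
          have := vsub_mem_vectorSpan ℝ hx hx₀
          simpa [vsub_eq_sub] using this
        have h1 := hker _ hv
        rw [map_sub] at h1
        simp only [mem_setOf_eq]
        linarith
      -- a coordinate on which f is nonzero
      have hex : ∃ i : Fin (n + 1), f (Pi.single i (1 : ℝ)) ≠ 0 := by
        by_contra h
        push_neg at h
        apply hf0
        apply LinearMap.ext
        intro x
        show f x = 0
        have h' : ∀ i : Fin (n + 1), f (fun j => if i = j then (1 : ℝ) else 0) = 0 := by
          intro i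
          have : (fun j => if i = j then (1 : ℝ) else 0) = Pi.single i (1 : ℝ) := by
            funext j
            simp [Pi.single_apply, eq_comm]
          rw [this]
          exact h i
        rw [LinearMap.pi_apply_eq_sum_univ f x]
        simp [h']
      obtain ⟨i, hi⟩ := hex
      set ei : Fin (n + 1) → ℝ := Pi.single i (1 : ℝ) with heidef
      -- decomposition of insertNth
      have hdec : ∀ (t : ℝ) (y : Fin n → ℝ), i.insertNth t y = i.insertNth 0 y + t • ei := by
        intro t y
        funext k
        by_cases hk : k = i
        · subst hk
          simp [Fin.insertNth_apply_same, heidef, Pi.single_eq_same]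
        · obtain ⟨j, rfl⟩ := Fin.exists_succAbove_eq hk
          simp [Fin.insertNth_apply_succAbove, heidef,
            Pi.single_eq_of_ne (Fin.succAbove_ne i j)]
      set τ : (Fin n → ℝ) → ℝ := fun y => (c - f (i.insertNth 0 y)) / f ei with hτdef
      set ψ : (Fin n → ℝ) → (Fin (n + 1) → ℝ) := fun y => i.insertNth (τ y) y with hψdef
      have hfψ : ∀ y, f (ψ y) = c := by
        intro y
        have : f (ψ y) = f (i.insertNth 0 y) + τ y * f ei := by
          rw [hψdef]
          simp only []
          rw [hdec (τ y) y, map_add, _root_.map_smul, smul_eq_mul]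
        rw [this, hτdef]
        simp only []
        rw [div_mul_cancel₀ _ hi]
        ring
      have hψp : ∀ x : Fin (n + 1) → ℝ, f x = c → ψ (i.removeNth x) = x := by
        intro x hx
        have hxdec : i.insertNth (x i) (i.removeNth x) = x := by
          rw [Fin.insertNth_removeNth]
          exact Function.update_eq_self i x
        have hτx : τ (i.removeNth x) = x i := by
          have h1 : f x = f (i.insertNth 0 (i.removeNth x)) + x i * f ei := by
            conv_lhs => rw [← hxdec]
            rw [hdec (x i) (i.removeNth x), map_add, _root_.map_smul, smul_eq_mul]
          rw [hτdef]
          simp only []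
          rw [div_eq_iff hi]
          linarith
        rw [hψdef]
        simp only []
        rw [hτx, hxdec]
      -- continuity and measurability
      have hfc : Continuous f := f.continuous_of_finiteDimensional
      have hτc : Continuous τ := by
        rw [hτdef]
        exact (continuous_const.sub
          (hfc.comp (Continuous.finInsertNth i continuous_const continuous_id))).div_const _
      have hψc : Continuous ψ := by
        rw [hψdef]
        exact Continuous.finInsertNth i hτc continuous_id
      have hpm : Measurable (fun x : Fin (n + 1) → ℝ => i.removeNth x) :=
        measurable_pi_lambda _ fun j => measurable_pi_apply _
      set ν : Measure (Fin n → ℝ) := μ.map (fun x => i.removeNth x) with hνdef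
      haveI hνprob : IsProbabilityMeasure ν := Measure.isProbabilityMeasure_map hpm.aemeasurable
      have hintν : ∀ j, Integrable (fun y : Fin n → ℝ => y j) ν := by
        intro j
        rw [hνdef, integrable_map_measure (measurable_pi_apply j).aestronglyMeasurable
          hpm.aemeasurable]
        exact hint (i.succAbove j)
      have hintegν : ∀ j, ∫ y, y j ∂ν = ∫ x, x (i.succAbove j) ∂μ := by
        intro j
        rw [hνdef, integral_map hpm.aemeasurable (measurable_pi_apply j).aestronglyMeasurable]
        rfl
      have hfullnull : μ {x | f x = c}ᶜ = 0 :=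
        measure_mono_null (compl_subset_compl.mpr hKhyp) (msupport_compl_null μ)
      -- support of the pushforward
      have hsupν : msupport ν ⊆ (fun x => i.removeNth x) '' (msupport μ) := by
        intro z hz
        refine ⟨ψ z, ?_, ?_⟩
        · intro U hU hψU hU0
          have hVopen : IsOpen (ψ ⁻¹' U) := hU.preimage hψc
          have hνV : ν (ψ ⁻¹' U) ≠ 0 := hz _ hVopen hψU
          apply hνV
          rw [hνdef, Measure.map_apply hpm hVopen.measurableSet]
          have hsubU : (fun x : Fin (n + 1) → ℝ => i.removeNth x) ⁻¹' (ψ ⁻¹' U)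
              ⊆ U ∪ {x | f x = c}ᶜ := by
            intro x hx
            by_cases hfx : f x = c
            · left
              have h1 := hψp x hfx
              have h2 : ψ (i.removeNth x) ∈ U := hx
              rwa [h1] at h2
            · right
              exact hfx
          exact measure_mono_null hsubU (measure_union_null hU0 hfullnull)
        · show i.removeNth (ψ z) = z
          rw [hψdef]
          exact Fin.removeNth_insertNth (α := fun _ : Fin (n + 1) => ℝ) i (τ z) z
      -- apply the inductive hypothesis
      have hbν : (fun j => ∫ y, y j ∂ν) ∈ convexHull ℝ (msupport ν) := ih ν hνprob hintν
      have h1 : (fun j => ∫ y, y j ∂ν)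
          ∈ convexHull ℝ ((fun x => i.removeNth x) '' (msupport μ)) :=
        convexHull_mono hsupν hbν
      -- transfer through the linear projection
      have himg : (fun x : Fin (n + 1) → ℝ => i.removeNth x) '' (convexHull ℝ (msupport μ))
          = convexHull ℝ ((fun x : Fin (n + 1) → ℝ => i.removeNth x) '' (msupport μ)) := by
        have := (LinearMap.funLeft ℝ ℝ i.succAbove).image_convexHull (msupport μ)
        exact this
      rw [← himg] at h1
      obtain ⟨w, hw, hPw⟩ := h1
      have hwhyp : f w = c :=
        convexHull_min hKhyp (convex_hyperplane f.isLinear c) hw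
      have hbhyp : f b = c := by
        have hbs : (fun x => f x) =ᵐ[μ] fun _ => c := by
          filter_upwards [ae_mem_msupport μ] with x hx
          exact hKhyp hx
        have h2 : ∫ x, f x ∂μ = c := by
          rw [integral_congr_ae hbs, integral_const, probReal_univ]
          simp
        rw [← h2, integral_linearMap μ hint f]
      have hpb : i.removeNth b = fun j => ∫ y, y j ∂ν := by
        funext j
        exact (hintegν j).symm
      have hbw : b = w := by
        have h2 : ψ (i.removeNth b) = b := hψp b hbhyp
        have h3 : ψ (i.removeNth w) = w := hψp w hwhyp
        have h4 : i.removeNth w = fun j => ∫ y, y j ∂ν := hPw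
        rw [← h2, ← h3, hpb, h4]
      rw [hbw]
      exact hw


/-- if the expectation of a probability measure with support in `S`
exists, it belongs to the convex hull of `S`. -/
theorem expectation_mem_convexHull {n : ℕ} (S : Set (Fin n → ℝ))
    (μ : Measure (Fin n → ℝ)) (hμ : IsProbabilityMeasure μ)
    (hsupp : msupport μ ⊆ S)
    (hint : ∀ i, Integrable (fun x => x i) μ) :
    (fun i => ∫ x, x i ∂μ) ∈ convexHull ℝ S :=
  convexHull_mono hsupp (key μ hμ hint)
end
end

section
/- Let Ψ : ℝⁿ → ℝᵐ be a Borel measurable function, S ⊆ ℝⁿ, and Ξ ∈ ℝᵐ. Then there exists a Borel probability measure μ on ℝⁿ with support contained in S such that E_μ[Ψ(X)] = Ξ if and only if Ξ belongs to the convex hull of Ψ(S). Moreover, in the forward direction the measure μ can be taken to have finite support. -/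
open MeasureTheory Set Filter Topology
open scoped BigOperators ENNReal

noncomputable section

section Separation

variable {F : Type*} [NormedAddCommGroup F] [NormedSpace ℝ F] [FiniteDimensional ℝ F]

/-- Weak separation of a point from a convex set in a finite-dimensional space. -/
lemma exists_sep [Nontrivial F] {C : Set F} (hC : Convex ℝ C) (h0 : (0:F) ∉ C) :
    ∃ ℓ : F →L[ℝ] ℝ, ℓ ≠ 0 ∧ ∀ x ∈ C, ℓ x ≤ 0 := by
  rcases C.eq_empty_or_nonempty with rfl | ⟨a₀, ha₀⟩
  · obtain ⟨x, hx⟩ := exists_ne (0 : F)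
    obtain ⟨g, hg1, hgx⟩ := exists_dual_vector ℝ x (norm_ne_zero_iff.mpr hx)
    refine ⟨g, fun h => ?_, by simp⟩
    rw [h] at hgx
    simp only [ContinuousLinearMap.zero_apply] at hgx
    exact hx (norm_eq_zero.mp (by exact_mod_cast hgx.symm))
  by_cases hi : (interior C).Nonempty
  · obtain ⟨y, hy⟩ := hi
    obtain ⟨f, hf⟩ := geometric_hahn_banach_open_point hC.interior isOpen_interior
      (fun h => h0 (interior_subset h))
    have hfy : f y < 0 := by simpa using hf y hy
    refine ⟨f, fun h => by simp [h] at hfy, ?_⟩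
    intro x hx
    by_contra hpos
    push_neg at hpos
    set d := f x - f y with hd
    have hd0 : 0 < d := by simp only [hd]; linarith
    set t := min 1 (f x / d) / 2 with ht
    have htpos : 0 < t := by
      have h1 : 0 < f x / d := div_pos hpos hd0
      have h2 : 0 < min 1 (f x / d) := lt_min one_pos h1
      positivity
    have ht1 : t ≤ 1 / 2 := by
      have : min 1 (f x / d) ≤ 1 := min_le_left _ _
      simp only [ht]; linarith
    have hmem : t • y + (1 - t) • x ∈ interior C :=
      hC.combo_interior_closure_mem_interior hy (subset_closure hx) htpos
        (by linarith) (by ring)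
    have hlt := hf _ hmem
    rw [map_add, f.map_smul, f.map_smul] at hlt
    simp only [smul_eq_mul, map_zero] at hlt
    have hfxtd : f x < t * d := by simp only [hd]; nlinarith
    have htd : t * d ≤ f x / 2 := by
      have h1 : t ≤ (f x / d) / 2 := by
        have : min 1 (f x / d) ≤ f x / d := min_le_right _ _
        simp only [ht]; linarith
      calc t * d ≤ ((f x / d) / 2) * d := mul_le_mul_of_nonneg_right h1 hd0.le
        _ = f x / 2 := by field_simp
    linarith
  · have hspan : affineSpan ℝ C ≠ ⊤ := fun h =>
      hi (hC.interior_nonempty_iff_affineSpan_eq_top.mpr h)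
    have hvs : vectorSpan ℝ C ≠ ⊤ := fun h =>
      hspan ((AffineSubspace.affineSpan_eq_top_iff_vectorSpan_eq_top_of_nonempty ℝ F F ⟨a₀, ha₀⟩).mpr h)
    obtain ⟨f, hf0, hfmap⟩ :=
      (vectorSpan ℝ C).exists_dual_map_eq_bot_of_lt_top hvs.lt_top inferInstance
    have hconst : ∀ x ∈ C, f x = f a₀ := by
      intro x hx
      have hmem : x - a₀ ∈ vectorSpan ℝ C := by
        simpa using vsub_mem_vectorSpan ℝ hx ha₀
      have h0' : f (x - a₀) = 0 := by
        have : f (x - a₀) ∈ Submodule.map f (vectorSpan ℝ C) :=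
          Submodule.mem_map_of_mem hmem
        rw [hfmap] at this
        simpa using this
      rw [map_sub, sub_eq_zero] at h0'
      exact h0'
    set ℓ := LinearMap.toContinuousLinearMap f with hℓ
    have hℓ0 : ℓ ≠ 0 := by
      intro h
      apply hf0
      ext v
      have : ℓ v = 0 := by rw [h]; rfl
      simpa [hℓ] using this
    by_cases hc : f a₀ ≤ 0
    · refine ⟨ℓ, hℓ0, fun x hx => ?_⟩
      show f x ≤ 0
      rw [hconst x hx]; exact hc
    · refine ⟨-ℓ, by simpa using hℓ0, fun x hx => ?_⟩
      show -(f x) ≤ 0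
      rw [hconst x hx]; linarith

end Separation

section Barycenter

variable {F : Type*} [NormedAddCommGroup F] [NormedSpace ℝ F] [FiniteDimensional ℝ F]
variable {α : Type*} [MeasurableSpace α]

lemma mem_of_finrank_zero {μ : Measure α} [IsProbabilityMeasure μ]
    {W : Submodule ℝ F} {A : Set F} {f : α → F}
    (hae : ∀ᵐ x ∂μ, f x ∈ A)
    (hWA : ∀ a ∈ A, a - ∫ x, f x ∂μ ∈ W) (hk : Module.finrank ℝ W = 0) :
    (∫ x, f x ∂μ) ∈ convexHull ℝ A := by
  have hW : W = ⊥ := Submodule.finrank_eq_zero.mp hk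
  haveI : (ae μ).NeBot := ae_neBot.mpr (IsProbabilityMeasure.ne_zero μ)
  obtain ⟨x, hx⟩ := hae.exists
  have h0 : f x - ∫ x, f x ∂μ = 0 := by
    have := hWA _ hx
    rwa [hW, Submodule.mem_bot] at this
  have : (∫ x, f x ∂μ) = f x := by
    rw [sub_eq_zero] at h0; exact h0.symm
  rw [this]
  exact subset_convexHull ℝ A hx

lemma aux_integral_mem (μ : Measure α) [IsProbabilityMeasure μ] :
    ∀ (k : ℕ) (W : Submodule ℝ F) (A : Set F) (f : α → F),
      Integrable f μ → (∀ᵐ x ∂μ, f x ∈ A) →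
      (∀ a ∈ A, a - ∫ x, f x ∂μ ∈ W) → Module.finrank ℝ W ≤ k →
      (∫ x, f x ∂μ) ∈ convexHull ℝ A := by
  intro k
  induction k with
  | zero =>
    intro W A f hfi hae hWA hk
    exact mem_of_finrank_zero hae hWA (Nat.le_zero.mp hk)
  | succ k ih =>
    intro W A f hfi hae hWA hk
    set b := ∫ x, f x ∂μ with hb
    by_cases hbA : b ∈ convexHull ℝ A
    · exact hbA
    by_cases hW0 : Module.finrank ℝ W = 0
    · exact mem_of_finrank_zero hae hWA hW0
    haveI : Nontrivial W :=
      Module.finrank_pos_iff.mp (Nat.pos_of_ne_zero hW0)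
    set C : Set W := {w : W | (w : F) + b ∈ convexHull ℝ A} with hCdef
    have hCconv : Convex ℝ C := by
      intro u hu v hv s t hs ht hst
      simp only [hCdef, mem_setOf_eq] at hu hv ⊢
      have hcomb := (convex_convexHull ℝ A) hu hv hs ht hst
      have heq : ((s • u + t • v : W) : F) + b
          = s • ((u : F) + b) + t • ((v : F) + b) := by
        push_cast
        rw [smul_add, smul_add]
        rw [show s • (u:F) + s • b + (t • (v:F) + t • b)
            = s • (u:F) + t • (v:F) + (s + t) • b by rw [add_smul]; abel]
        rw [hst, one_smul]
      rw [heq]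
      exact hcomb
    have hC0 : (0 : W) ∉ C := by
      simp only [hCdef, mem_setOf_eq, Submodule.coe_zero, zero_add]
      exact hbA
    obtain ⟨ℓ, hℓ0, hℓ⟩ := exists_sep hCconv hC0
    obtain ⟨g, hg, -⟩ := exists_extension_norm_eq W ℓ
    have hgA : ∀ a ∈ A, g (a - b) ≤ 0 := by
      intro a ha
      have hw : a - b ∈ W := hWA a ha
      have hmem : (⟨a - b, hw⟩ : W) ∈ C := by
        simp only [hCdef, mem_setOf_eq, sub_add_cancel]
        exact subset_convexHull ℝ A ha
      calc g (a - b) = ℓ ⟨a - b, hw⟩ := hg ⟨a - b, hw⟩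
        _ ≤ 0 := hℓ _ hmem
    have hfib : Integrable (fun x => f x - b) μ := hfi.sub (integrable_const b)
    have hgi : Integrable (fun x => g (f x - b)) μ := g.integrable_comp hfib
    have hgint : ∫ x, g (f x - b) ∂μ = 0 := by
      rw [g.integral_comp_comm hfib]
      have : ∫ x, (f x - b) ∂μ = 0 := by
        rw [integral_sub hfi (integrable_const b), integral_const]
        simp [hb]
      rw [this, map_zero]
    have hae0 : ∀ᵐ x ∂μ, g (f x - b) = 0 := by
      have hle : 0 ≤ᵐ[μ] fun x => -g (f x - b) :=
        hae.mono fun x hx => by simpa using hgA _ hx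
      have hz : ∫ x, -g (f x - b) ∂μ = 0 := by
        rw [integral_neg, hgint, neg_zero]
      have := (integral_eq_zero_iff_of_nonneg_ae hle hgi.neg).mp hz
      filter_upwards [this] with x hx
      have h' : -g (f x - b) = 0 := hx
      linarith
    set A' := {a ∈ A | g (a - b) = 0} with hA'
    have hae' : ∀ᵐ x ∂μ, f x ∈ A' := by
      filter_upwards [hae, hae0] with x h1 h2
      exact ⟨h1, h2⟩
    set W' := W ⊓ LinearMap.ker (g : F →ₗ[ℝ] ℝ) with hW'
    have hWA' : ∀ a ∈ A', a - b ∈ W' := by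
      intro a ha
      exact ⟨hWA a ha.1, by simpa [LinearMap.mem_ker] using ha.2⟩
    have hlt : W' < W := by
      obtain ⟨w, hw⟩ : ∃ w : W, ℓ w ≠ 0 := by
        by_contra h
        push_neg at h
        exact hℓ0 (ContinuousLinearMap.ext fun w => by simp [h w])
      refine lt_of_le_of_ne inf_le_left ?_
      intro h
      have hmem : (w : F) ∈ W' := by rw [h]; exact w.2
      have h0' : g (w : F) = 0 := by simpa [LinearMap.mem_ker] using hmem.2
      exact hw (hg w ▸ h0')
    have hfr : Module.finrank ℝ W' ≤ k :=
      Nat.lt_succ_iff.mp (lt_of_lt_of_le (Submodule.finrank_lt_finrank_of_lt hlt) hk)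
    have hb' := ih W' A' f hfi hae' hWA' hfr
    exact convexHull_mono (fun a ha => ha.1) hb'

/-- The barycenter of a probability measure lies in the convex hull of any set
carrying the measure, in finite dimensions. -/
lemma integral_mem_convexHull (μ : Measure α) [IsProbabilityMeasure μ]
    {f : α → F} {A : Set F} (hfi : Integrable f μ) (hae : ∀ᵐ x ∂μ, f x ∈ A) :
    (∫ x, f x ∂μ) ∈ convexHull ℝ A :=
  aux_integral_mem μ (Module.finrank ℝ F) ⊤ A f hfi hae
    (fun _ _ => Submodule.mem_top) (by rw [finrank_top])

end Barycenter

/-- existence of a probability measure with support in `S` whose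
expectation of `Ψ` is `Ξ` is equivalent to `Ξ ∈ H(Ψ(S))`; moreover in the
forward direction the measure can be taken with finite support. -/
theorem exists_measure_expectation_iff_mem_convexHull {n m : ℕ}
    (Ψ : (Fin n → ℝ) → Fin m → ℝ) (hΨ : Measurable Ψ)
    (S : Set (Fin n → ℝ)) (Ξ : Fin m → ℝ) :
    ((∃ μ : Measure (Fin n → ℝ), IsProbabilityMeasure μ ∧ msupport μ ⊆ S ∧
        (∀ i, Integrable (fun x => Ψ x i) μ) ∧ (fun i => ∫ x, Ψ x i ∂μ) = Ξ) ↔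
      Ξ ∈ convexHull ℝ (Ψ '' S)) ∧
    (Ξ ∈ convexHull ℝ (Ψ '' S) →
      ∃ μ : Measure (Fin n → ℝ), IsProbabilityMeasure μ ∧ msupport μ ⊆ S ∧
        (msupport μ).Finite ∧
        (∀ i, Integrable (fun x => Ψ x i) μ) ∧ (fun i => ∫ x, Ψ x i ∂μ) = Ξ) := by
  -- the construction direction
  have construction : Ξ ∈ convexHull ℝ (Ψ '' S) →
      ∃ μ : Measure (Fin n → ℝ), IsProbabilityMeasure μ ∧ msupport μ ⊆ S ∧
        (msupport μ).Finite ∧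
        (∀ i, Integrable (fun x => Ψ x i) μ) ∧ (fun i => ∫ x, Ψ x i ∂μ) = Ξ := by
    intro hΞ
    rw [convexHull_eq] at hΞ
    obtain ⟨ι, t, w, z, hw0, hw1, hzS, hcm⟩ := hΞ
    rw [Finset.centerMass_eq_of_sum_1 _ _ hw1] at hcm
    -- restrict to positive weights
    set t' := t.filter (fun i => 0 < w i) with ht'
    have hsub : t' ⊆ t := Finset.filter_subset _ _
    have hzero : ∀ i ∈ t, i ∉ t' → w i = 0 := by
      intro i hi hni
      have : ¬ 0 < w i := fun h => hni (Finset.mem_filter.mpr ⟨hi, h⟩)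
      exact le_antisymm (not_lt.mp this) (hw0 i hi)
    have hw1' : ∑ i ∈ t', w i = 1 := by
      rw [← hw1]
      exact (Finset.sum_subset hsub (fun i hi hni => hzero i hi hni))
    have hcm' : ∑ i ∈ t', w i • z i = Ξ := by
      rw [← hcm]
      exact Finset.sum_subset hsub (fun i hi hni => by rw [hzero i hi hni, zero_smul])
    -- choose preimages
    have hchoice : ∀ i : {x // x ∈ t'}, ∃ q ∈ S, Ψ q = z i :=
      fun i => hzS i (hsub i.2)
    choose p hpS hpz using hchoice
    -- the measure
    set μ : Measure (Fin n → ℝ) :=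
      ∑ i ∈ t'.attach, ENNReal.ofReal (w i) • Measure.dirac (p i) with hμ
    have happly : ∀ s : Set (Fin n → ℝ),
        μ s = ∑ i ∈ t'.attach, ENNReal.ofReal (w i) * Measure.dirac (p i) s := by
      intro s
      rw [hμ, Measure.finset_sum_apply]
      simp [Measure.smul_apply, smul_eq_mul]
    have hwpos : ∀ i : {x // x ∈ t'}, 0 < w i :=
      fun i => (Finset.mem_filter.mp i.2).2
    have hprob : IsProbabilityMeasure μ := by
      constructor
      rw [happly]
      simp only [measure_univ, mul_one]
      rw [← ENNReal.ofReal_sum_of_nonneg (fun i _ => (hwpos i).le)]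
      rw [Finset.sum_attach t' w, hw1']
      simp
    haveI := hprob
    have hfin_range : (Set.range p).Finite := Set.finite_range p
    have hsupp : msupport μ ⊆ Set.range p := by
      intro x hx
      by_contra hxr
      have hopen : IsOpen ((Set.range p)ᶜ) := hfin_range.isClosed.isOpen_compl
      have hzeroU : μ ((Set.range p)ᶜ) = 0 := by
        rw [happly]
        apply Finset.sum_eq_zero
        intro i _
        have hd : (Measure.dirac (p i)) ((Set.range p)ᶜ) = 0 := by
          rw [Measure.dirac_apply]
          simp [Set.indicator_of_notMem, Set.mem_range_self]
        rw [hd, mul_zero]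
      exact hx _ hopen hxr hzeroU
    have hsuppS : msupport μ ⊆ S := by
      intro x hx
      obtain ⟨i, rfl⟩ := hsupp hx
      exact hpS i
    have hsuppfin : (msupport μ).Finite := hfin_range.subset hsupp
    -- integrability
    have hint : ∀ g : (Fin n → ℝ) → ℝ, Integrable g μ := by
      intro g
      rw [hμ]
      rw [integrable_finset_sum_measure]
      intro i _
      refine Integrable.smul_measure ?_ ENNReal.ofReal_ne_top
      refine (integrable_const (g (p i))).congr ?_
      rw [ae_dirac_eq]
      exact Filter.eventually_pure.mpr rfl
    have hintegral : ∀ g : (Fin n → ℝ) → ℝ,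
        ∫ x, g x ∂μ = ∑ i ∈ t'.attach, w i * g (p i) := by
      intro g
      rw [hμ, integral_finset_sum_measure (fun i _ => by
        refine Integrable.smul_measure ?_ ENNReal.ofReal_ne_top
        refine (integrable_const (g (p i))).congr ?_
        rw [ae_dirac_eq]
        exact Filter.eventually_pure.mpr rfl)]
      refine Finset.sum_congr rfl fun i _ => ?_
      rw [integral_smul_measure, integral_dirac]
      rw [ENNReal.toReal_ofReal (hwpos i).le]
      rfl
    refine ⟨μ, hprob, hsuppS, hsuppfin, fun i => hint _, ?_⟩
    funext j
    rw [hintegral]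
    have : ∑ i ∈ t'.attach, w i * Ψ (p i) j = ∑ i ∈ t'.attach, w ↑i * z ↑i j := by
      refine Finset.sum_congr rfl fun i _ => by rw [hpz i]
    rw [this, Finset.sum_attach t' (fun i => w i * z i j)]
    have := congrFun hcm' j
    simpa [Finset.sum_apply] using this
  refine ⟨⟨?_, fun h => (construction h).imp
    (fun μ h => ⟨h.1, h.2.1, h.2.2.2.1, h.2.2.2.2⟩)⟩, construction⟩
  rintro ⟨μ, hprob, hsupp, hint, hΞ⟩
  haveI := hprob
  -- a.e. membership in the support
  have hnull : μ ((msupport μ)ᶜ) = 0 := by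
    apply measure_null_of_locally_null
    intro x hx
    simp only [msupport, mem_compl_iff, mem_setOf_eq] at hx
    push_neg at hx
    obtain ⟨U, hUopen, hxU, hU0⟩ := hx
    exact ⟨U, mem_nhdsWithin_of_mem_nhds (hUopen.mem_nhds hxU), hU0⟩
  have hae : ∀ᵐ x ∂μ, Ψ x ∈ Ψ '' S := by
    have : ∀ᵐ x ∂μ, x ∈ msupport μ := by
      rw [ae_iff]
      exact hnull
    filter_upwards [this] with x hx
    exact Set.mem_image_of_mem Ψ (hsupp hx)
  -- vector-valued integrability
  have hΨint : Integrable Ψ μ := by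
    have h1 : Integrable (fun x => ∑ i : Fin m, (Ψ x i) • (Pi.single i (1:ℝ) : Fin m → ℝ)) μ := by
      apply integrable_finset_sum
      intro i _
      exact ((ContinuousLinearMap.id ℝ ℝ).smulRight
        (Pi.single i (1:ℝ) : Fin m → ℝ)).integrable_comp (hint i)
    refine h1.congr (Filter.Eventually.of_forall fun x => ?_)
    funext j
    simp [Finset.sum_apply, Pi.single_apply, mul_ite, Finset.sum_ite_eq',
      smul_eq_mul]
  -- the integral equals Ξ
  have hintΞ : (∫ x, Ψ x ∂μ) = Ξ := by
    funext j
    have := (ContinuousLinearMap.proj (R := ℝ) (φ := fun _ : Fin m => ℝ) j).integral_comp_comm hΨint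
    simp only [ContinuousLinearMap.proj_apply] at this
    rw [← this]
    exact congrFun hΞ j
  rw [← hintΞ]
  exact integral_mem_convexHull μ hΨint hae
end
end

section
/- Let f₁,…,f_m, g : ℝⁿ → ℝ be Borel measurable, S ⊆ ℝⁿ, and φ ∈ ℝᵐ. Then the infimum over μ ∈ M(S,φ) of E_μ[g(X)] equals the infimum of the last coordinate z over γ(S,φ), and also equals the infimum of E_μ[g(X)] over μ ∈ M_{m+2}(S,φ); likewise, the supremum over μ ∈ M(S,φ) of E_μ[g(X)] equals the supremum of z over γ(S,φ) and equals the supremum of E_μ[g(X)] over μ ∈ M_{m+2}(S,φ). (All equalities hold in the extended reals, with inf over the empty set equal to +∞ and sup equal to −∞.) -/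
open MeasureTheory Set Filter Topology
open scoped BigOperators ENNReal

noncomputable section

/-- `M(S,φ)`: Borel probability measures with support contained in `S`,
with `E[f i] = φ i` for all `i` and `E[g]` finite. -/
def MC (n m : ℕ) (f : (Fin n → ℝ) → Fin m → ℝ) (g : (Fin n → ℝ) → ℝ)
    (S : Set (Fin n → ℝ)) (φ : Fin m → ℝ) : Set (Measure (Fin n → ℝ)) :=
  {μ | IsProbabilityMeasure μ ∧ msupport μ ⊆ S ∧
    (∀ i, Integrable (fun x => f x i) μ) ∧ (∀ i, ∫ x, f x i ∂μ = φ i) ∧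
    Integrable g μ}

/-- `M_k(S,φ)`: members of `M(S,φ)` whose support has at most `k` points. -/
def MCk (n m : ℕ) (f : (Fin n → ℝ) → Fin m → ℝ) (g : (Fin n → ℝ) → ℝ)
    (S : Set (Fin n → ℝ)) (φ : Fin m → ℝ) (k : ℕ) : Set (Measure (Fin n → ℝ)) :=
  {μ | μ ∈ MC n m f g S φ ∧ (msupport μ).encard ≤ (k : ℕ∞)}

/-- `γ(S,φ)`: intersection of the convex hull of `Γ(S)` with the line `{φ} × ℝ`,
where `Γ x = (f x, g x) ∈ ℝ^m × ℝ`. -/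
def gam (n m : ℕ) (f : (Fin n → ℝ) → Fin m → ℝ) (g : (Fin n → ℝ) → ℝ)
    (S : Set (Fin n → ℝ)) (φ : Fin m → ℝ) : Set ((Fin m → ℝ) × ℝ) :=
  convexHull ℝ ((fun x => (f x, g x)) '' S) ∩ {p | p.1 = φ}

open Module

theorem barycenter_aux (d : ℕ) : ∀ {α : Type} [MeasurableSpace α] {E : Type}
    [NormedAddCommGroup E] [NormedSpace ℝ E] [FiniteDimensional ℝ E]
    (μ : Measure α) [IsProbabilityMeasure μ] (h : α → E) (T : Set E),
    Integrable h μ → (∀ᵐ x ∂μ, h x ∈ T) → finrank ℝ (vectorSpan ℝ T) ≤ d →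
    ∫ x, h x ∂μ ∈ convexHull ℝ T := by
  induction d using Nat.strong_induction_on with
  | _ d IH =>
  intro α _ E _ _ _ μ _ h T hi hT hd
  have hμ : (μ : Measure α) ≠ 0 := IsProbabilityMeasure.ne_zero μ
  haveI : NeBot (ae μ) := ae_neBot.2 hμ
  obtain ⟨x₀, hx₀⟩ := hT.exists
  set b : E := ∫ x, h x ∂μ with hb_def
  have hbcl : b ∈ closure (convexHull ℝ T) := by
    refine ((convex_convexHull ℝ T).closure).integral_mem isClosed_closure ?_ hi
    exact hT.mono fun x hx => subset_closure (subset_convexHull ℝ T hx)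
  by_cases hbC : b ∈ convexHull ℝ T
  · exact hbC
  set A : AffineSubspace ℝ E := affineSpan ℝ T with hA_def
  have hbA : b ∈ A := by
    have h1 : closure (convexHull ℝ T) ⊆ closure (A : Set E) :=
      closure_mono (convexHull_subset_affineSpan T)
    exact (AffineSubspace.closed_of_finiteDimensional A).closure_subset (h1 hbcl)
  set V : Submodule ℝ E := A.direction with hV_def
  have hVvs : V = vectorSpan ℝ T := direction_affineSpan ℝ T
  set aff : V →ᵃ[ℝ] E :=
    ((AffineEquiv.constVAdd ℝ E b).toAffineMap.comp (V.subtype.toAffineMap)) with haff_def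
  have haff : ∀ v : V, aff v = b + (v : E) := fun v => rfl
  set D : Set V := aff ⁻¹' (convexHull ℝ T) with hD_def
  have hmemD : ∀ v : V, v ∈ D ↔ b + (v : E) ∈ convexHull ℝ T := fun v => Iff.rfl
  have memD : ∀ x ∈ convexHull ℝ T, ∃ v : V, (v : E) = x - b ∧ v ∈ D := by
    intro x hx
    have hxA : x ∈ A := convexHull_subset_affineSpan T hx
    have hmem : x - b ∈ V := AffineSubspace.vsub_mem_direction hxA hbA
    refine ⟨⟨x - b, hmem⟩, rfl, ?_⟩
    rw [hmemD]
    simpa using hx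
  have hD0 : (0 : V) ∉ D := by
    rw [hmemD]; simpa using hbC
  have hDconv : Convex ℝ D := (convex_convexHull ℝ T).affine_preimage aff
  have hDne : D.Nonempty := by
    obtain ⟨v, _, hv⟩ := memD (h x₀) (subset_convexHull ℝ T hx₀)
    exact ⟨v, hv⟩
  have hDspan : affineSpan ℝ D = ⊤ := by
    have hdir : vectorSpan ℝ D = (⊤ : Submodule ℝ V) := by
      apply Submodule.map_injective_of_injective (Submodule.injective_subtype V)
      rw [Submodule.map_subtype_top]
      rw [vectorSpan_def, Submodule.map_span]
      have himg : (V.subtype) '' (D -ᵥ D) = (convexHull ℝ T) -ᵥ (convexHull ℝ T) := by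
        ext y
        constructor
        · rintro ⟨z, ⟨v, hv, w, hw, rfl⟩, rfl⟩
          refine ⟨b + (v : E), (hmemD v).1 hv, b + (w : E), (hmemD w).1 hw, ?_⟩
          simp [vsub_eq_sub]
        · rintro ⟨x, hx, y', hy', rfl⟩
          obtain ⟨v, hveq, hv⟩ := memD x hx
          obtain ⟨w, hweq, hw⟩ := memD y' hy'
          refine ⟨v -ᵥ w, ⟨v, hv, w, hw, rfl⟩, ?_⟩
          simp only [vsub_eq_sub, Submodule.coe_subtype, AddSubgroupClass.coe_sub, hveq, hweq]
          abel
      rw [himg, ← vectorSpan_def]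
      rw [← direction_affineSpan, affineSpan_convexHull, ← hA_def, ← hV_def]
    obtain ⟨v₁, hv₁⟩ := hDne
    refine (AffineSubspace.direction_eq_top_iff_of_nonempty
      ⟨v₁, subset_affineSpan ℝ D hv₁⟩).1 ?_
    rw [direction_affineSpan, hdir]
  have hint : (interior D).Nonempty :=
    (hDconv.interior_nonempty_iff_affineSpan_eq_top).2 hDspan
  obtain ⟨a₀, ha₀⟩ := hint
  obtain ⟨f, hf⟩ := geometric_hahn_banach_open_point (hDconv.interior) isOpen_interior
    (fun hc : (0:V) ∈ interior D => hD0 (interior_subset hc))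
  have hf0 : ∀ a ∈ interior D, f a < 0 := by
    intro a ha
    simpa using hf a ha
  have hfD : ∀ v ∈ D, f v ≤ 0 := by
    intro v hv
    have hsub : D ⊆ closure (interior D) := by
      intro w hw
      have hcont : Continuous (fun t : ℝ => (1 - t) • a₀ + t • w) := by fun_prop
      have htend : Tendsto (fun t : ℝ => (1 - t) • a₀ + t • w) (nhdsWithin 1 (Iio 1)) (nhds w) :=
        (hcont.tendsto' 1 w (by simp)).mono_left nhdsWithin_le_nhds
      refine mem_closure_of_tendsto htend ?_
      have hIoo : Ioo (0:ℝ) 1 ∈ nhdsWithin (1:ℝ) (Iio 1) :=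
        Ioo_mem_nhdsLT (by norm_num)
      filter_upwards [hIoo] with t ht
      exact hDconv.combo_interior_closure_mem_interior ha₀ (subset_closure hw)
        (by linarith [ht.2]) (le_of_lt ht.1) (by ring)
    have hcl : closure (interior D) ⊆ {v : V | f v ≤ 0} :=
      closure_minimal (fun a ha => (hf0 a ha).le) (isClosed_le f.continuous continuous_const)
    exact hcl (hsub hv)
  obtain ⟨g, hg, -⟩ := exists_extension_norm_eq V f
  have hgT : ∀ x ∈ T, g x ≤ g b := by
    intro x hx
    obtain ⟨v, hveq, hv⟩ := memD x (subset_convexHull ℝ T hx)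
    have hkey : g x - g b = f v := by
      rw [← hg v, hveq]
      simp [map_sub]
    linarith [hfD v hv]
  have hgi : Integrable (fun x => g (h x)) μ := g.integrable_comp hi
  have hgint : ∫ x, g (h x) ∂μ = g b := g.integral_comp_comm hi
  have haeq : ∀ᵐ x ∂μ, g (h x) = g b := by
    have hnn : 0 ≤ᵐ[μ] fun x => g b - g (h x) :=
      hT.mono fun x hx => by simp [sub_nonneg, hgT _ hx]
    have hint2 : Integrable (fun x => g b - g (h x)) μ := (integrable_const _).sub hgi
    have hzero : ∫ x, (g b - g (h x)) ∂μ = 0 := by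
      rw [integral_sub (integrable_const _) hgi, hgint, integral_const]
      simp
    filter_upwards [(integral_eq_zero_iff_of_nonneg_ae hnn hint2).1 hzero] with x hx
    have hx' : g b - g (h x) = 0 := hx
    linarith
  set T' : Set E := T ∩ {y | g y = g b} with hT'_def
  have hT' : ∀ᵐ x ∂μ, h x ∈ T' := by
    filter_upwards [hT, haeq] with x h1 h2
    exact ⟨h1, h2⟩
  have hker : vectorSpan ℝ T' ≤ vectorSpan ℝ T ⊓ LinearMap.ker (g : E →ₗ[ℝ] ℝ) := by
    refine le_inf (vectorSpan_mono ℝ inter_subset_left) ?_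
    rw [vectorSpan_def, Submodule.span_le]
    rintro y ⟨p, hp, q, hq, rfl⟩
    simp only [SetLike.mem_coe, LinearMap.mem_ker, vsub_eq_sub]
    rw [ContinuousLinearMap.coe_coe, map_sub, hp.2, hq.2, sub_self]
  have hstrict : vectorSpan ℝ T ⊓ LinearMap.ker (g : E →ₗ[ℝ] ℝ) < vectorSpan ℝ T := by
    refine lt_of_le_of_ne inf_le_left ?_
    intro hEq
    have ha₀V : ((a₀ : E)) ∈ vectorSpan ℝ T := by rw [← hVvs]; exact a₀.2
    rw [← hEq] at ha₀V
    have hga : g (a₀ : E) = 0 := LinearMap.mem_ker.1 ha₀V.2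
    have hfa : f a₀ = 0 := by rw [← hg a₀]; exact hga
    exact absurd hfa (ne_of_lt (hf0 a₀ ha₀))
  have hdrop : finrank ℝ (vectorSpan ℝ T') < d := by
    have h1 : finrank ℝ (vectorSpan ℝ T') ≤
        finrank ℝ (vectorSpan ℝ T ⊓ LinearMap.ker (g : E →ₗ[ℝ] ℝ) : Submodule ℝ E) :=
      Submodule.finrank_mono hker
    have h2 := Submodule.finrank_lt_finrank_of_lt hstrict
    omega
  exact convexHull_mono inter_subset_left
    (IH (finrank ℝ (vectorSpan ℝ T')) hdrop μ h T' hi hT' le_rfl)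

theorem integral_mem_convexHull_s4 {α : Type} [MeasurableSpace α] {E : Type}
    [NormedAddCommGroup E] [NormedSpace ℝ E] [FiniteDimensional ℝ E]
    (μ : Measure α) [IsProbabilityMeasure μ] {h : α → E} {T : Set E}
    (hi : Integrable h μ) (hT : ∀ᵐ x ∂μ, h x ∈ T) :
    ∫ x, h x ∂μ ∈ convexHull ℝ T :=
  barycenter_aux (finrank ℝ (vectorSpan ℝ T)) μ h T hi hT le_rfl

theorem compl_msupport_eq {E : Type*} [TopologicalSpace E] [MeasurableSpace E]
    (μ : Measure E) : (msupport μ)ᶜ = ⋃₀ {U | IsOpen U ∧ μ U = 0} := by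
  ext x
  simp only [mem_compl_iff, msupport, mem_setOf_eq, not_forall, mem_sUnion]
  constructor
  · rintro ⟨U, hU, hx, h0⟩
    exact ⟨U, ⟨hU, not_not.1 h0⟩, hx⟩
  · rintro ⟨U, ⟨hU, h0⟩, hx⟩
    exact ⟨U, hU, hx, not_not.2 h0⟩

theorem measure_compl_msupport {E : Type*} [TopologicalSpace E] [MeasurableSpace E]
    [SecondCountableTopology E]
    (μ : Measure E) : μ (msupport μ)ᶜ = 0 := by
  rw [compl_msupport_eq]
  obtain ⟨T, hTc, hTsub, hTU⟩ := TopologicalSpace.isOpen_sUnion_countable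
    {U | IsOpen U ∧ μ U = 0} (fun U hU => hU.1)
  rw [← hTU]
  exact (measure_sUnion_null_iff hTc).2 fun s hs => (hTsub hs).2

theorem integrable_pi_fun {n m : ℕ} {f : (Fin n → ℝ) → Fin m → ℝ}
    (hf : ∀ i, Measurable fun x => f x i) {μ : Measure (Fin n → ℝ)}
    (hfi : ∀ i, Integrable (fun x => f x i) μ) :
    Integrable (fun x => f x) μ := by
  refine Integrable.mono' (integrable_finset_sum Finset.univ fun i _ => (hfi i).norm)
    ((measurable_pi_lambda _ hf).aestronglyMeasurable) ?_
  refine Eventually.of_forall fun x => ?_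
  rw [pi_norm_le_iff_of_nonneg (Finset.sum_nonneg fun i _ => norm_nonneg _)]
  exact fun i => Finset.single_le_sum (fun j _ => norm_nonneg _) (Finset.mem_univ i)

theorem mem_gam_of_mem_MC {n m : ℕ} {f : (Fin n → ℝ) → Fin m → ℝ} {g : (Fin n → ℝ) → ℝ}
    (hf : ∀ i, Measurable fun x => f x i) (hg : Measurable g)
    {S : Set (Fin n → ℝ)} {φ : Fin m → ℝ} {μ : Measure (Fin n → ℝ)}
    (hμ : μ ∈ MC n m f g S φ) :
    ((φ, ∫ x, g x ∂μ) : (Fin m → ℝ) × ℝ) ∈ gam n m f g S φ := by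
  obtain ⟨hprob, hsupp, hfint, hfeq, hgint⟩ := hμ
  haveI := hprob
  have haeS : ∀ᵐ x ∂μ, x ∈ S := by
    have : ∀ᵐ x ∂μ, x ∈ msupport μ := by
      rw [ae_iff]
      exact measure_compl_msupport μ
    exact this.mono fun x hx => hsupp hx
  have hfi : Integrable (fun x => f x) μ := integrable_pi_fun hf hfint
  have hΓi : Integrable (fun x => ((f x, g x) : (Fin m → ℝ) × ℝ)) μ := hfi.prodMk hgint
  have hfφ : ∫ x, f x ∂μ = φ := by
    funext i
    have hproj := (ContinuousLinearMap.proj (R := ℝ) (φ := fun _ : Fin m => ℝ) i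
      ).integral_comp_comm hfi
    rw [← hfeq i]
    exact hproj.symm
  have hΓint : ∫ x, ((f x, g x) : (Fin m → ℝ) × ℝ) ∂μ = (φ, ∫ x, g x ∂μ) := by
    rw [integral_pair hfi hgint, hfφ]
  constructor
  · rw [← hΓint]
    exact integral_mem_convexHull_s4 μ hΓi
      (haeS.mono fun x hx => mem_image_of_mem _ hx)
  · rfl

theorem exists_discrete_measure {n m : ℕ} {f : (Fin n → ℝ) → Fin m → ℝ}
    {g : (Fin n → ℝ) → ℝ}
    (hf : ∀ i, Measurable fun x => f x i) (hg : Measurable g)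
    {S : Set (Fin n → ℝ)} {φ : Fin m → ℝ} {p : (Fin m → ℝ) × ℝ}
    (hp : p ∈ gam n m f g S φ) :
    ∃ μ, μ ∈ MCk n m f g S φ (m + 2) ∧ ∫ x, g x ∂μ = p.2 := by
  obtain ⟨hp1, hp2⟩ := hp
  obtain ⟨ι, hfin, z, w, hzr, hai, hwpos, hwsum, hwz⟩ :=
    eq_pos_convex_span_of_mem_convexHull hp1
  have hx' : ∀ i : ι, ∃ y, y ∈ S ∧ ((f y, g y) : (Fin m → ℝ) × ℝ) = z i := by
    intro i
    rcases hzr (mem_range_self i) with ⟨y, hyS, hyz⟩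
    exact ⟨y, hyS, hyz⟩
  choose x hxS hxz using hx'
  set μd : Measure (Fin n → ℝ) :=
    ∑ i : ι, ENNReal.ofReal (w i) • Measure.dirac (x i) with hμd_def
  -- probability measure
  have hprob : IsProbabilityMeasure μd := by
    constructor
    rw [hμd_def, Measure.finset_sum_apply]
    simp only [Measure.smul_apply, measure_univ, smul_eq_mul, mul_one]
    rw [← ENNReal.ofReal_sum_of_nonneg (fun i _ => (hwpos i).le), hwsum]
    exact ENNReal.ofReal_one
  -- integrability and integral of any measurable real function
  have key : ∀ h : (Fin n → ℝ) → ℝ, Measurable h →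
      Integrable h μd ∧ ∫ y, h y ∂μd = ∑ i, w i * h (x i) := by
    intro h hh
    have hdint : ∀ i : ι, Integrable h (ENNReal.ofReal (w i) • Measure.dirac (x i)) := by
      intro i
      refine Integrable.smul_measure ?_ ENNReal.ofReal_ne_top
      exact (integrable_const (h (x i))).congr (ae_eq_dirac h).symm
    constructor
    · rw [hμd_def]
      exact integrable_finset_sum_measure.2 fun i _ => hdint i
    · rw [hμd_def, integral_finset_sum_measure fun i _ => hdint i]
      congr 1
      funext i
      rw [integral_smul_measure, integral_dirac, ENNReal.toReal_ofReal (hwpos i).le,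
        smul_eq_mul]
  -- support
  have hsupp : msupport μd ⊆ Set.range x := by
    intro y hy
    by_contra hy'
    refine hy (Set.range x)ᶜ (isOpen_compl_iff.2 (Set.finite_range x).isClosed) hy' ?_
    rw [hμd_def, Measure.finset_sum_apply]
    refine Finset.sum_eq_zero fun i _ => ?_
    rw [Measure.smul_apply, Measure.dirac_apply' _ (Set.finite_range x).isClosed.measurableSet.compl,
      Set.indicator_of_notMem (by simp [mem_range_self i]), smul_zero]
  have hcard : (msupport μd).encard ≤ ((m + 2 : ℕ) : ℕ∞) := by
    refine le_trans (Set.encard_mono hsupp) ?_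
    have h1 : (Set.range x).encard ≤ (Set.univ : Set ι).encard := by
      rw [← Set.image_univ]
      exact Set.encard_image_le x Set.univ
    have h2 : (Set.univ : Set ι).encard = (Fintype.card ι : ℕ∞) := by
      rw [Set.encard_univ, ENat.card_eq_coe_fintype_card]
    have h3 : Fintype.card ι ≤ m + 2 := by
      have := hai.card_le_finrank_succ
      have h4 : finrank ℝ (vectorSpan ℝ (Set.range z)) ≤ finrank ℝ ((Fin m → ℝ) × ℝ) :=
        Submodule.finrank_le _
      have h5 : finrank ℝ ((Fin m → ℝ) × ℝ) = m + 1 := by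
        rw [Module.finrank_prod, Module.finrank_pi, Module.finrank_self]
        simp
      omega
    refine h1.trans ?_
    rw [h2]
    exact_mod_cast h3
  -- moments
  have hzf : ∀ i : ι, (z i).1 = f (x i) := fun i => by rw [← hxz i]
  have hzg : ∀ i : ι, (z i).2 = g (x i) := fun i => by rw [← hxz i]
  have hmom : ∀ j, ∫ y, f y j ∂μd = φ j := by
    intro j
    rw [(key _ (hf j)).2]
    have h1 := congrArg Prod.fst hwz
    rw [Prod.fst_sum] at h1
    have h2 := congrArg (fun q => q j) h1
    simp only [Finset.sum_apply, Prod.smul_fst, Pi.smul_apply, smul_eq_mul] at h2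
    rw [← hp2]
    rw [← h2]
    congr 1
    funext i
    rw [hzf i]
  have hgm : ∫ y, g y ∂μd = p.2 := by
    rw [(key _ hg).2]
    have h1 := congrArg Prod.snd hwz
    rw [Prod.snd_sum] at h1
    simp only [Prod.smul_snd, smul_eq_mul] at h1
    rw [← h1]
    congr 1
    funext i
    rw [hzg i]
  have hsS : msupport μd ⊆ S := by
    intro y hy
    obtain ⟨i, hi⟩ := hsupp hy
    exact hi ▸ hxS i
  exact ⟨μd, ⟨⟨hprob, hsS, fun j => (key _ (hf j)).1, hmom, (key _ hg).1⟩, hcard⟩, hgm⟩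

/-- Hull inequality: the extrema of `E[g]` over `M(S,φ)` equal
the extrema of the last coordinate over `γ(S,φ)`, and the extrema over
`M_{m+2}(S,φ)`. -/
theorem hull_inequality {n m : ℕ}
    (f : (Fin n → ℝ) → Fin m → ℝ) (g : (Fin n → ℝ) → ℝ)
    (hf : ∀ i, Measurable fun x => f x i) (hg : Measurable g)
    (S : Set (Fin n → ℝ)) (φ : Fin m → ℝ) :
    (⨅ μ ∈ MC n m f g S φ, ((∫ x, g x ∂μ : ℝ) : EReal)) =
        (⨅ p ∈ gam n m f g S φ, ((p.2 : ℝ) : EReal)) ∧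
    (⨅ μ ∈ MC n m f g S φ, ((∫ x, g x ∂μ : ℝ) : EReal)) =
        (⨅ μ ∈ MCk n m f g S φ (m + 2), ((∫ x, g x ∂μ : ℝ) : EReal)) ∧
    (⨆ μ ∈ MC n m f g S φ, ((∫ x, g x ∂μ : ℝ) : EReal)) =
        (⨆ p ∈ gam n m f g S φ, ((p.2 : ℝ) : EReal)) ∧
    (⨆ μ ∈ MC n m f g S φ, ((∫ x, g x ∂μ : ℝ) : EReal)) =
        (⨆ μ ∈ MCk n m f g S φ (m + 2), ((∫ x, g x ∂μ : ℝ) : EReal)) := by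
  have hinfMk : (⨅ μ ∈ MC n m f g S φ, ((∫ x, g x ∂μ : ℝ) : EReal)) ≤
      ⨅ μ ∈ MCk n m f g S φ (m + 2), ((∫ x, g x ∂μ : ℝ) : EReal) :=
    le_iInf₂ fun μ hμ => iInf₂_le μ hμ.1
  have hinfγ : (⨅ μ ∈ MCk n m f g S φ (m + 2), ((∫ x, g x ∂μ : ℝ) : EReal)) ≤
      ⨅ p ∈ gam n m f g S φ, ((p.2 : ℝ) : EReal) := by
    refine le_iInf₂ fun p hp => ?_
    obtain ⟨μ, hμ, hint⟩ := exists_discrete_measure hf hg hp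
    exact le_trans (iInf₂_le μ hμ) (by rw [hint])
  have hinfM : (⨅ p ∈ gam n m f g S φ, ((p.2 : ℝ) : EReal)) ≤
      ⨅ μ ∈ MC n m f g S φ, ((∫ x, g x ∂μ : ℝ) : EReal) :=
    le_iInf₂ fun μ hμ => iInf₂_le ((φ, ∫ x, g x ∂μ)) (mem_gam_of_mem_MC hf hg hμ)
  have hsupMk : (⨆ μ ∈ MCk n m f g S φ (m + 2), ((∫ x, g x ∂μ : ℝ) : EReal)) ≤
      ⨆ μ ∈ MC n m f g S φ, ((∫ x, g x ∂μ : ℝ) : EReal) :=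
    iSup₂_le fun μ hμ => le_iSup₂ (f := fun μ _ => ((∫ x, g x ∂μ : ℝ) : EReal)) μ hμ.1
  have hsupγ : (⨆ μ ∈ MC n m f g S φ, ((∫ x, g x ∂μ : ℝ) : EReal)) ≤
      ⨆ p ∈ gam n m f g S φ, ((p.2 : ℝ) : EReal) :=
    iSup₂_le fun μ hμ => le_iSup₂ (f := fun p _ => ((p.2 : ℝ) : EReal)) ((φ, ∫ x, g x ∂μ)) (mem_gam_of_mem_MC hf hg hμ)
  have hsupM : (⨆ p ∈ gam n m f g S φ, ((p.2 : ℝ) : EReal)) ≤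
      ⨆ μ ∈ MCk n m f g S φ (m + 2), ((∫ x, g x ∂μ : ℝ) : EReal) := by
    refine iSup₂_le fun p hp => ?_
    obtain ⟨μ, hμ, hint⟩ := exists_discrete_measure hf hg hp
    exact le_trans (by rw [hint]) (le_iSup₂ (f := fun μ _ => ((∫ x, g x ∂μ : ℝ) : EReal)) μ hμ)
  refine ⟨le_antisymm (hinfMk.trans hinfγ) hinfM,
    le_antisymm hinfMk (hinfγ.trans hinfM),
    le_antisymm hsupγ (hsupM.trans hsupMk),
    le_antisymm (hsupγ.trans hsupM) hsupMk⟩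
end
end

section
/- Let f₁,…,f_m, g : ℝⁿ → ℝ be Borel measurable, S ⊆ ℝⁿ, φ ∈ ℝᵐ, and suppose σ₊ = sup{z : (φ,z) ∈ γ(S,φ)} is finite. Then there exist α ∈ ℝᵐ, β ≥ 0 and c ∈ ℝ with (α,β) ≠ 0 such that ⟨α, f(x)⟩ + β·g(x) + c ≤ 0 for all x ∈ S, and the supremum over μ ∈ M(S,φ) of E_μ[⟨α, f(X)⟩ + β·g(X) + c] equals 0. -/
open MeasureTheory Set Filter Topology
open scoped BigOperators ENNReal

noncomputable section

/-- Supporting functional at a point outside the interior of a convex set. -/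
lemma exists_nonzero_le_of_not_mem_interior
    {E : Type*} [NormedAddCommGroup E] [NormedSpace ℝ E] [FiniteDimensional ℝ E]
    [Nontrivial E] {K : Set E} (hK : Convex ℝ K)
    {x₀ : E} (hx₀ : x₀ ∉ interior K) :
    ∃ F : E →L[ℝ] ℝ, F ≠ 0 ∧ ∀ y ∈ K, F y ≤ F x₀ := by
  by_cases hne : (interior K).Nonempty
  · obtain ⟨F, hF⟩ := geometric_hahn_banach_open_point hK.interior isOpen_interior hx₀
    obtain ⟨a, ha⟩ := hne
    refine ⟨F, ?_, ?_⟩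
    · intro h0
      have := hF a ha
      rw [h0] at this
      simp at this
    · intro y hy
      have key : ∀ t : ℝ, 0 < t → t ≤ 1 → F (t • a + (1 - t) • y) < F x₀ := fun t ht ht1 =>
        hF _ (hK.combo_interior_closure_mem_interior ha (subset_closure hy) ht
          (by linarith) (by ring))
      have h1 : Tendsto (fun k : ℕ => (1 / (k + 1) : ℝ)) atTop (nhds 0) :=
        tendsto_one_div_add_atTop_nhds_zero_nat
      have h2 : Tendsto (fun k : ℕ => ((1 : ℝ) - (1 / (k + 1) : ℝ))) atTop
          (nhds ((1 : ℝ) - (0 : ℝ))) :=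
        (tendsto_const_nhds (x := (1 : ℝ))).sub h1
      have tendE : Tendsto
          (fun k : ℕ => (1 / (k + 1) : ℝ) • a + ((1 : ℝ) - (1 / (k + 1) : ℝ)) • y)
          atTop (nhds ((0 : ℝ) • a + ((1 : ℝ) - (0 : ℝ)) • y)) :=
        (h1.smul_const a).add (h2.smul_const y)
      have tend := (F.continuous.tendsto _).comp tendE
      simp only [Function.comp_def, zero_smul, sub_zero, one_smul, zero_add] at tend
      refine le_of_tendsto tend
        (Eventually.of_forall fun k => (key (1 / (k + 1) : ℝ) ?_ ?_).le)
      · positivity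
      · rw [div_le_one (by positivity)]
        linarith [Nat.cast_nonneg (α := ℝ) k]
  · rcases K.eq_empty_or_nonempty with rfl | ⟨p, hp⟩
    · obtain ⟨v, hv⟩ := exists_ne (0 : E)
      obtain ⟨g, hg⟩ : ∃ g : Module.Dual ℝ E, g v ≠ 0 := by
        by_contra h
        push_neg at h
        exact hv ((Module.forall_dual_apply_eq_zero_iff ℝ v).1 h)
      refine ⟨LinearMap.toContinuousLinearMap g, ?_, by simp⟩
      intro h0
      apply hg
      have : (LinearMap.toContinuousLinearMap g) v = 0 := by rw [h0]; rfl
      simpa using this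
    · have hspan : affineSpan ℝ K ≠ ⊤ := fun h =>
        hne (hK.interior_nonempty_iff_affineSpan_eq_top.2 h)
      set W := (affineSpan ℝ K).direction with hWdef
      have hWt : W ≠ ⊤ := fun h =>
        hspan ((AffineSubspace.direction_eq_top_iff_of_nonempty
          ((affineSpan_nonempty ℝ).2 ⟨p, hp⟩)).1 h)
      obtain ⟨u, hu⟩ : ∃ u, u ∉ W := by
        by_contra h
        push_neg at h
        exact hWt (Submodule.eq_top_iff'.2 h)
      have hπu : W.mkQ u ≠ 0 := by
        rw [Submodule.mkQ_apply, Ne, Submodule.Quotient.mk_eq_zero]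
        exact hu
      obtain ⟨g, hg⟩ : ∃ g : Module.Dual ℝ (E ⧸ W), g (W.mkQ u) ≠ 0 := by
        by_contra h
        push_neg at h
        exact hπu ((Module.forall_dual_apply_eq_zero_iff ℝ _).1 h)
      set G : E →ₗ[ℝ] ℝ := g ∘ₗ W.mkQ with hGdef
      have hGu : G u ≠ 0 := hg
      have hG0 : ∀ y ∈ K, G y = G p := by
        intro y hy
        have hmem : y - p ∈ W := by
          have := AffineSubspace.vsub_mem_direction
            (subset_affineSpan ℝ K hy) (subset_affineSpan ℝ K hp)
          simpa [vsub_eq_sub] using this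
        have h2 : G (y - p) = 0 := by
          simp only [hGdef, LinearMap.comp_apply, Submodule.mkQ_apply]
          rw [(Submodule.Quotient.mk_eq_zero W).2 hmem, map_zero]
        have h3 : G y - G p = 0 := by rw [← map_sub]; exact h2
        linarith
      rcases le_total (G p) (G x₀) with h | h
      · refine ⟨LinearMap.toContinuousLinearMap G, ?_, ?_⟩
        · intro h0
          apply hGu
          have : (LinearMap.toContinuousLinearMap G) u = 0 := by rw [h0]; rfl
          simpa using this
        · intro y hy
          have h1 : (LinearMap.toContinuousLinearMap G) y = G y := rfl
          have h2 : (LinearMap.toContinuousLinearMap G) x₀ = G x₀ := rfl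
          rw [h1, h2, hG0 y hy]
          exact h
      · refine ⟨-LinearMap.toContinuousLinearMap G, ?_, ?_⟩
        · intro h0
          apply hGu
          have : (-LinearMap.toContinuousLinearMap G) u = 0 := by rw [h0]; rfl
          simp only [ContinuousLinearMap.neg_apply, neg_eq_zero] at this
          simpa using this
        · intro y hy
          simp only [ContinuousLinearMap.neg_apply, neg_le_neg_iff]
          have h1 : (LinearMap.toContinuousLinearMap G) y = G y := rfl
          have h2 : (LinearMap.toContinuousLinearMap G) x₀ = G x₀ := rfl
          rw [h1, h2, hG0 y hy]
          exact h

/-- If the `msupport` of a measure is contained in `S`, then a.e. point is in `S`. -/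
lemma ae_mem_of_msupport_subset {X : Type*} [TopologicalSpace X] [MeasurableSpace X]
    [SecondCountableTopology X]
    {μ : Measure X} {S : Set X} (h : msupport μ ⊆ S) : ∀ᵐ x ∂μ, x ∈ S := by
  have key : μ (msupport μ)ᶜ = 0 := by
    set B := {U ∈ TopologicalSpace.countableBasis X | μ U = 0} with hBdef
    have hBc : B.Countable :=
      (TopologicalSpace.countable_countableBasis X).mono (Set.sep_subset _ _)
    have hsub : (msupport μ)ᶜ ⊆ ⋃₀ B := by
      intro x hx
      simp only [msupport, Set.mem_compl_iff, Set.mem_setOf_eq, not_forall] at hx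
      obtain ⟨U, hUopen, hxU, hU0⟩ := hx
      rw [not_not] at hU0
      obtain ⟨V, hVB, hxV, hVU⟩ :=
        (TopologicalSpace.isBasis_countableBasis X).exists_subset_of_mem_open hxU hUopen
      exact ⟨V, ⟨hVB, le_antisymm (hU0 ▸ measure_mono hVU) zero_le⟩, hxV⟩
    exact measure_mono_null hsub ((measure_sUnion_null_iff hBc).2 fun s hs => hs.2)
  have hS : μ Sᶜ = 0 := measure_mono_null (Set.compl_subset_compl.2 h) key
  exact measure_mono_null (fun x hx => hx) hS

/-- Any point of the section `{z | (φ,z) ∈ convexHull Γ(S)}` is attained as `∫ g`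
for some measure in `MC`. -/
lemma exists_mem_MC {n m : ℕ}
    (f : (Fin n → ℝ) → Fin m → ℝ) (g : (Fin n → ℝ) → ℝ)
    (hf : ∀ i, Measurable fun x => f x i) (hg : Measurable g)
    (S : Set (Fin n → ℝ)) (φ : Fin m → ℝ) {z : ℝ}
    (hz : ((φ, z) : (Fin m → ℝ) × ℝ) ∈ convexHull ℝ ((fun x => (f x, g x)) '' S)) :
    ∃ μ ∈ MC n m f g S φ, ∫ x, g x ∂μ = z := by
  rw [convexHull_eq] at hz
  obtain ⟨ι, t, w, Z, hw0, hw1, hZ, hcm⟩ := hz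
  have hch : ∀ i ∈ t, ∃ x, x ∈ S ∧ (f x, g x) = Z i := by
    intro i hi
    obtain ⟨x, hxS, hxe⟩ := hZ i hi
    exact ⟨x, hxS, hxe⟩
  classical
  set xs : ι → (Fin n → ℝ) := fun i => if h : i ∈ t then (hch i h).choose else fun _ => 0
    with hxsdef
  have hxsS : ∀ i ∈ t, xs i ∈ S := by
    intro i hi
    simp only [hxsdef, dif_pos hi]
    exact (hch i hi).choose_spec.1
  have hxsZ : ∀ i ∈ t, (f (xs i), g (xs i)) = Z i := by
    intro i hi
    simp only [hxsdef, dif_pos hi]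
    exact (hch i hi).choose_spec.2
  set μ : Measure (Fin n → ℝ) := ∑ i ∈ t, ENNReal.ofReal (w i) • Measure.dirac (xs i)
    with hμdef
  have hintd : ∀ (h : (Fin n → ℝ) → ℝ), Measurable h → ∀ i ∈ t,
      Integrable h (ENNReal.ofReal (w i) • Measure.dirac (xs i)) := by
    intro h hh i _
    refine Integrable.smul_measure ?_ ENNReal.ofReal_ne_top
    exact (integrable_const (h (xs i))).congr (ae_eq_dirac' hh).symm
  have hint : ∀ (h : (Fin n → ℝ) → ℝ), Measurable h → Integrable h μ := by
    intro h hh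
    rw [hμdef, integrable_finset_sum_measure]
    exact hintd h hh
  have hI : ∀ (h : (Fin n → ℝ) → ℝ), Measurable h →
      ∫ x, h x ∂μ = ∑ i ∈ t, w i * h (xs i) := by
    intro h hh
    rw [hμdef, integral_finset_sum_measure (hintd h hh)]
    refine Finset.sum_congr rfl fun i hi => ?_
    rw [integral_smul_measure, integral_dirac, ENNReal.toReal_ofReal (hw0 i hi), smul_eq_mul]
  have hprob : IsProbabilityMeasure μ := by
    constructor
    rw [hμdef, Measure.finset_sum_apply]
    simp only [Measure.smul_apply, smul_eq_mul, measure_univ, mul_one]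
    rw [← ENNReal.ofReal_sum_of_nonneg hw0, hw1, ENNReal.ofReal_one]
  have hsupp : msupport μ ⊆ S := by
    intro x hx
    by_contra hxS
    have hximg : x ∉ ((t.image xs : Finset (Fin n → ℝ)) : Set (Fin n → ℝ)) := by
      simp only [Finset.coe_image, Set.mem_image, Finset.mem_coe]
      rintro ⟨i, hi, rfl⟩
      exact hxS (hxsS i hi)
    have hopen : IsOpen (((t.image xs : Finset (Fin n → ℝ)) : Set (Fin n → ℝ)))ᶜ :=
      (Set.Finite.isClosed (Finset.finite_toSet _)).isOpen_compl
    refine hx _ hopen hximg ?_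
    rw [hμdef, Measure.finset_sum_apply]
    refine Finset.sum_eq_zero fun i hi => ?_
    have hxi : xs i ∈ ((t.image xs : Finset (Fin n → ℝ)) : Set (Fin n → ℝ)) := by
      simp only [Finset.coe_image, Set.mem_image, Finset.mem_coe]
      exact ⟨i, hi, rfl⟩
    have hnot : xs i ∉ ((t.image xs : Finset (Fin n → ℝ)) : Set (Fin n → ℝ))ᶜ :=
      fun hcon => hcon hxi
    rw [Measure.smul_apply, Measure.dirac_apply, Set.indicator_of_notMem hnot]
    simp
  have hsum : ∑ i ∈ t, w i • Z i = ((φ, z) : (Fin m → ℝ) × ℝ) := by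
    rw [← Finset.centerMass_eq_of_sum_1 t Z hw1]
    exact hcm
  have hsum' : ∑ i ∈ t, w i • ((f (xs i), g (xs i)) : (Fin m → ℝ) × ℝ)
      = ((φ, z) : (Fin m → ℝ) × ℝ) := by
    rw [← hsum]
    exact Finset.sum_congr rfl fun i hi => by rw [hxsZ i hi]
  have hfst : ∀ j, ∑ i ∈ t, w i * f (xs i) j = φ j := by
    intro j
    have h1 := congrArg Prod.fst hsum'
    rw [Prod.fst_sum] at h1
    simp only [Prod.smul_fst] at h1
    have h2 := congrFun h1 j
    simpa [Finset.sum_apply] using h2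
  have hsnd : ∑ i ∈ t, w i * g (xs i) = z := by
    have h1 := congrArg Prod.snd hsum'
    rw [Prod.snd_sum] at h1
    simpa [smul_eq_mul] using h1
  refine ⟨μ, ⟨hprob, hsupp, fun i => hint _ (hf i), fun i => ?_, hint g hg⟩, ?_⟩
  · rw [hI _ (hf i)]
    exact hfst i
  · rw [hI g hg]
    exact hsnd

/-- Integral of an affine combination against a measure in `MC`. -/
lemma integral_affine_MC {n m : ℕ}
    (f : (Fin n → ℝ) → Fin m → ℝ) (g : (Fin n → ℝ) → ℝ)
    (S : Set (Fin n → ℝ)) (φ : Fin m → ℝ) (α : Fin m → ℝ) (β c : ℝ)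
    {μ : Measure (Fin n → ℝ)} (hμ : μ ∈ MC n m f g S φ) :
    ∫ x, ((∑ i, α i * f x i) + β * g x + c) ∂μ
      = (∑ i, α i * φ i) + β * (∫ x, g x ∂μ) + c := by
  obtain ⟨hp, _, hfi, hfe, hgi⟩ := hμ
  have h1 : Integrable (fun x => ∑ i, α i * f x i) μ :=
    integrable_finset_sum _ fun i _ => (hfi i).const_mul (α i)
  have h2 : Integrable (fun x => β * g x) μ := hgi.const_mul β
  have e1 : ∫ x, ((∑ i, α i * f x i) + β * g x + c) ∂μ
      = (∫ x, ((∑ i, α i * f x i) + β * g x) ∂μ) + ∫ _, c ∂μ :=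
    integral_add (h1.add h2) (integrable_const c)
  have e2 : ∫ x, ((∑ i, α i * f x i) + β * g x) ∂μ
      = (∫ x, (∑ i, α i * f x i) ∂μ) + ∫ x, β * g x ∂μ := integral_add h1 h2
  have e3 : ∫ x, (∑ i, α i * f x i) ∂μ = ∑ i, ∫ x, α i * f x i ∂μ :=
    integral_finset_sum _ fun i _ => (hfi i).const_mul (α i)
  have e4 : ∀ i, ∫ x, α i * f x i ∂μ = α i * φ i := fun i => by
    rw [integral_const_mul, hfe i]
  have e5 : ∫ x, β * g x ∂μ = β * ∫ x, g x ∂μ := integral_const_mul _ _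
  have e6 : ∫ (_ : Fin n → ℝ), c ∂μ = c := by
    rw [integral_const, probReal_univ, one_smul]
  rw [e1, e2, e3, e5, e6]
  congr 1
  congr 1
  exact Finset.sum_congr rfl fun i _ => e4 i

/-- supporting-hyperplane theorem, supremum case. -/
theorem supporting_hyperplane_sup {n m : ℕ}
    (f : (Fin n → ℝ) → Fin m → ℝ) (g : (Fin n → ℝ) → ℝ)
    (hf : ∀ i, Measurable fun x => f x i) (hg : Measurable g)
    (S : Set (Fin n → ℝ)) (φ : Fin m → ℝ) (σp : ℝ)
    (hσ : (⨆ p ∈ gam n m f g S φ, ((p.2 : ℝ) : EReal)) = (σp : EReal)) :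
    ∃ (α : Fin m → ℝ) (β c : ℝ), 0 ≤ β ∧
      ((α, β) : (Fin m → ℝ) × ℝ) ≠ 0 ∧
      (∀ x ∈ S, (∑ i, α i * f x i) + β * g x + c ≤ 0) ∧
      (⨆ μ ∈ MC n m f g S φ,
        ((∫ x, ((∑ i, α i * f x i) + β * g x + c) ∂μ : ℝ) : EReal)) = 0 := by
  classical
  set A : Set ((Fin m → ℝ) × ℝ) := (fun x => (f x, g x)) '' S with hAdef
  set T : Set ℝ := {z : ℝ | ((φ, z) : (Fin m → ℝ) × ℝ) ∈ convexHull ℝ A} with hTdef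
  -- upper bound on T
  have hTle : ∀ z ∈ T, z ≤ σp := by
    intro z hz
    have hmem : ((φ, z) : (Fin m → ℝ) × ℝ) ∈ gam n m f g S φ := ⟨hz, rfl⟩
    have h1 : ((z : ℝ) : EReal) ≤ ⨆ p ∈ gam n m f g S φ, ((p.2 : ℝ) : EReal) :=
      le_iSup₂ (f := fun (p : (Fin m → ℝ) × ℝ) (_ : p ∈ gam n m f g S φ) =>
        ((p.2 : ℝ) : EReal)) ((φ, z) : (Fin m → ℝ) × ℝ) hmem
    rw [hσ] at h1
    exact EReal.coe_le_coe_iff.1 h1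
  -- approximation from below
  have happrox : ∀ ε : ℝ, 0 < ε → ∃ z ∈ T, σp - ε < z := by
    intro ε hε
    by_contra h
    push_neg at h
    have h1 : (⨆ p ∈ gam n m f g S φ, ((p.2 : ℝ) : EReal)) ≤ ((σp - ε : ℝ) : EReal) := by
      refine iSup₂_le ?_
      rintro p ⟨hp1, hp2⟩
      have hpT : p.2 ∈ T := by
        have : ((φ, p.2) : (Fin m → ℝ) × ℝ) = p := by
          rw [← hp2]
        rw [hTdef]
        simp only [Set.mem_setOf_eq, this]
        exact hp1
      exact EReal.coe_le_coe_iff.2 (h _ hpT)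
    rw [hσ] at h1
    have := EReal.coe_le_coe_iff.1 h1
    linarith
  obtain ⟨z₀, hz₀T, _⟩ := happrox 1 one_pos
  have hAne : A.Nonempty := by
    by_contra hA
    rw [Set.not_nonempty_iff_eq_empty] at hA
    have := hz₀T
    rw [hTdef, hA] at this
    simp at this
  -- the augmented convex set
  set q : (Fin m → ℝ) × ℝ := (φ, σp - 1) with hqdef
  set K : Set ((Fin m → ℝ) × ℝ) := convexHull ℝ (insert q A) with hKdef
  -- section bound for K
  have hsec : ∀ p : (Fin m → ℝ) × ℝ, p ∈ K → p.1 = φ → p.2 ≤ σp := by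
    intro p hp hp1
    rw [hKdef, convexHull_insert hAne, mem_convexJoin] at hp
    obtain ⟨x, hx, k, hk, hseg⟩ := hp
    rw [Set.mem_singleton_iff] at hx
    subst hx
    obtain ⟨a, b, ha, hb, hab, heq⟩ := hseg
    have hfst : a • φ + b • k.1 = φ := by
      have := congrArg Prod.fst heq
      simpa [hqdef, hp1] using this
    have hsnd : a * (σp - 1) + b * k.2 = p.2 := by
      have := congrArg Prod.snd heq
      simpa [hqdef, smul_eq_mul] using this
    rcases eq_or_lt_of_le hb with hb0 | hbpos
    · have ha1 : a = 1 := by linarith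
      rw [← hsnd, ← hb0, ha1]
      linarith
    · have hk1 : k.1 = φ := by
        funext j
        have hj := congrFun hfst j
        simp only [Pi.add_apply, Pi.smul_apply, smul_eq_mul] at hj
        have hz : (1 - a - b) * φ j = 0 := by
          rw [show (1 : ℝ) - a - b = 0 from by linarith]
          ring
        have hcan : b * k.1 j = b * φ j := by nlinarith [hj, hz]
        exact mul_left_cancel₀ (ne_of_gt hbpos) hcan
      have hkT : k.2 ∈ T := by
        rw [hTdef]
        simp only [Set.mem_setOf_eq]
        have : ((φ, k.2) : (Fin m → ℝ) × ℝ) = k := by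
          rw [← hk1]
        rw [this]
        exact hk
      have hk2 : k.2 ≤ σp := hTle _ hkT
      have hb1 : b * k.2 ≤ b * σp := mul_le_mul_of_nonneg_left hk2 hb
      have ha1 : a * (σp - 1) ≤ a * σp := mul_le_mul_of_nonneg_left (by linarith) ha
      have hab1 : a * σp + b * σp = σp := by rw [← add_mul, hab, one_mul]
      linarith
  -- (φ, σp) is not interior to K
  have hx₀ : ((φ, σp) : (Fin m → ℝ) × ℝ) ∉ interior K := by
    intro hmem
    obtain ⟨ε, hε, hball⟩ := Metric.isOpen_iff.1 isOpen_interior _ hmem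
    have hmem2 : ((φ, σp + ε / 2) : (Fin m → ℝ) × ℝ) ∈ K := by
      refine interior_subset (hball ?_)
      rw [Metric.mem_ball, Prod.dist_eq]
      simp only [dist_self, Real.dist_eq, add_sub_cancel_left, abs_of_pos (by positivity : (0:ℝ) < ε / 2)]
      rw [max_eq_right (by positivity)]
      linarith
    have h5 := hsec _ hmem2 rfl
    simp only at h5
    linarith
  -- supporting functional
  obtain ⟨F, hFne, hFle⟩ := exists_nonzero_le_of_not_mem_interior (convex_convexHull ℝ _) hx₀
  set α : Fin m → ℝ := fun i => F ((Pi.single i 1 : Fin m → ℝ), (0 : ℝ)) with hαdef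
  set β : ℝ := F ((0 : Fin m → ℝ), (1 : ℝ)) with hβdef
  have hrep : ∀ (y : Fin m → ℝ) (zz : ℝ),
      F ((y, zz) : (Fin m → ℝ) × ℝ) = (∑ i, α i * y i) + β * zz := by
    intro y zz
    have hdecomp : ((y, zz) : (Fin m → ℝ) × ℝ)
        = (∑ i, (y i) • (((Pi.single i 1 : Fin m → ℝ), (0 : ℝ)) : (Fin m → ℝ) × ℝ))
          + zz • (((0 : Fin m → ℝ), (1 : ℝ)) : (Fin m → ℝ) × ℝ) := by
      have h1 : (∑ i, (y i) • (((Pi.single i 1 : Fin m → ℝ), (0 : ℝ)) : (Fin m → ℝ) × ℝ))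
          = ((y, 0) : (Fin m → ℝ) × ℝ) := by
        rw [Prod.ext_iff]
        constructor
        · rw [Prod.fst_sum]
          simp only [Prod.smul_fst]
          have hterm : ∀ i : Fin m,
              (y i) • (Pi.single i (1 : ℝ) : Fin m → ℝ) = Pi.single i (y i) := by
            intro i
            have h := Pi.single_smul (f := fun _ : Fin m => ℝ) i (y i) (1 : ℝ)
            simpa using h.symm
          rw [Finset.sum_congr rfl fun i _ => hterm i]
          exact Finset.univ_sum_single y
        · rw [Prod.snd_sum]
          simp
      rw [h1]
      ext j
      · simp
      · simp
    rw [hdecomp, map_add, map_sum]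
    simp only [ContinuousLinearMap.map_smul, smul_eq_mul]
    congr 1
    · exact Finset.sum_congr rfl fun i _ => mul_comm _ _
    · exact mul_comm _ _
  set c : ℝ := -((∑ i, α i * φ i) + β * σp) with hcdef
  have hFx₀ : F ((φ, σp) : (Fin m → ℝ) × ℝ) = (∑ i, α i * φ i) + β * σp := hrep φ σp
  -- β ≥ 0
  have hβ0 : 0 ≤ β := by
    have hq : q ∈ K := subset_convexHull ℝ _ (Set.mem_insert q A)
    have := hFle q hq
    rw [hqdef] at this
    rw [hrep φ (σp - 1), hFx₀] at this
    linarith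
  -- nonzero
  have hne : ((α, β) : (Fin m → ℝ) × ℝ) ≠ 0 := by
    intro h
    have hα : α = 0 := congrArg Prod.fst h
    have hβz : β = 0 := congrArg Prod.snd h
    apply hFne
    refine ContinuousLinearMap.ext fun v => ?_
    obtain ⟨v1, v2⟩ := v
    have hv : F ((v1, v2) : (Fin m → ℝ) × ℝ) = 0 := by
      rw [hrep, hα, hβz]
      simp
    simpa using hv
  -- inequality on S
  have hineq : ∀ x ∈ S, (∑ i, α i * f x i) + β * g x + c ≤ 0 := by
    intro x hx
    have hmem : ((f x, g x) : (Fin m → ℝ) × ℝ) ∈ K :=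
      subset_convexHull ℝ _ (Set.mem_insert_of_mem q ⟨x, hx, rfl⟩)
    have := hFle _ hmem
    rw [hrep (f x) (g x), hFx₀] at this
    rw [hcdef]
    linarith
  refine ⟨α, β, c, hβ0, hne, hineq, ?_⟩
  -- the supremum over MC is 0
  have hval : ∀ μ ∈ MC n m f g S φ,
      ∫ x, ((∑ i, α i * f x i) + β * g x + c) ∂μ
        = (∑ i, α i * φ i) + β * (∫ x, g x ∂μ) + c := fun μ hμ =>
    integral_affine_MC f g S φ α β c hμ
  have hub : ∀ μ ∈ MC n m f g S φ,
      ∫ x, ((∑ i, α i * f x i) + β * g x + c) ∂μ ≤ 0 := by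
    intro μ hμ
    have hae : ∀ᵐ x ∂μ, x ∈ S := ae_mem_of_msupport_subset hμ.2.1
    exact integral_nonpos_of_ae (hae.mono fun x hx => hineq x hx)
  have hlow : ∀ ε : ℝ, 0 < ε → ∃ μ ∈ MC n m f g S φ,
      -ε ≤ ∫ x, ((∑ i, α i * f x i) + β * g x + c) ∂μ := by
    intro ε hε
    obtain ⟨z, hzT, hzgt⟩ := happrox (ε / (β + 1)) (by positivity)
    obtain ⟨μ, hμ, hgz⟩ := exists_mem_MC f g hf hg S φ hzT
    refine ⟨μ, hμ, ?_⟩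
    rw [hval μ hμ, hgz, hcdef]
    have hzle : z ≤ σp := hTle _ hzT
    have h1 : β * (σp - z) ≤ β * (ε / (β + 1)) :=
      mul_le_mul_of_nonneg_left (by linarith) hβ0
    have h2 : β * (ε / (β + 1)) ≤ (β + 1) * (ε / (β + 1)) :=
      mul_le_mul_of_nonneg_right (by linarith) (by positivity)
    have h3 : (β + 1) * (ε / (β + 1)) = ε := by
      field_simp
    linarith
  refine le_antisymm ?_ ?_
  · refine iSup₂_le fun μ hμ => ?_
    exact EReal.coe_nonpos.2 (hub μ hμ)
  · by_contra hlt
    push_neg at hlt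
    set sup : EReal := ⨆ μ ∈ MC n m f g S φ,
      ((∫ x, ((∑ i, α i * f x i) + β * g x + c) ∂μ : ℝ) : EReal) with hsupdef
    have hles : ∀ μ ∈ MC n m f g S φ,
        ((∫ x, ((∑ i, α i * f x i) + β * g x + c) ∂μ : ℝ) : EReal) ≤ sup := by
      intro μ hμ
      exact le_iSup₂ (f := fun (μ : Measure (Fin n → ℝ)) (_ : μ ∈ MC n m f g S φ) =>
        ((∫ x, ((∑ i, α i * f x i) + β * g x + c) ∂μ : ℝ) : EReal)) μ hμ
    obtain ⟨μ₁, hμ₁, h1⟩ := hlow 1 one_pos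
    have hnb : ((-1 : ℝ) : EReal) ≤ sup :=
      le_trans (EReal.coe_le_coe_iff.2 h1) (hles μ₁ hμ₁)
    have hne_bot : sup ≠ ⊥ := fun h => by
      rw [h] at hnb
      exact lt_irrefl _ (lt_of_lt_of_le (EReal.bot_lt_coe (-1)) hnb)
    have hne_top : sup ≠ ⊤ := ne_top_of_lt hlt
    lift sup to ℝ using ⟨hne_top, hne_bot⟩ with r hr
    have hrneg : r < 0 := by
      have := hlt
      rw [show (0 : EReal) = ((0 : ℝ) : EReal) by simp] at this
      exact EReal.coe_lt_coe_iff.1 this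
    obtain ⟨μ₂, hμ₂, h2⟩ := hlow (-r / 2) (by linarith)
    have h3 : ((∫ x, ((∑ i, α i * f x i) + β * g x + c) ∂μ₂ : ℝ) : EReal) ≤ (r : EReal) :=
      hles μ₂ hμ₂
    have h4 : ∫ x, ((∑ i, α i * f x i) + β * g x + c) ∂μ₂ ≤ r :=
      EReal.coe_le_coe_iff.1 h3
    linarith
end
end

section
/- Let f₁,…,f_m, g : ℝⁿ → ℝ be Borel measurable, S ⊆ ℝⁿ, φ ∈ ℝᵐ, and suppose σ₊ = sup{z : (φ,z) ∈ γ(S,φ)} is finite and the point (φ, σ₊) belongs to γ(S,φ). Then there exist α ∈ ℝᵐ, β ≥ 0, c ∈ ℝ with (α,β) ≠ 0 and ⟨α, f(x)⟩ + β·g(x) + c ≤ 0 for all x ∈ S, and a measure μ₊ ∈ M_{m+1}(S,φ) with support s₊ (a set of at most m+1 points) such that E_{μ₊}[g(X)] = σ₊ and ⟨α, f(x)⟩ + β·g(x) + c = 0 for every x ∈ s₊. -/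
open MeasureTheory Set Filter Topology
open scoped BigOperators ENNReal

noncomputable section

open scoped Pointwise

/-- Weak separation of a point from a convex set in a finite-dimensional space. -/
theorem exists_weak_sep {E : Type*} [NormedAddCommGroup E] [NormedSpace ℝ E]
    [FiniteDimensional ℝ E] {D : Set E} (hD : Convex ℝ D) (hne : D.Nonempty)
    (h0 : (0 : E) ∉ D) : ∃ L : E →L[ℝ] ℝ, L ≠ 0 ∧ ∀ d ∈ D, 0 ≤ L d := by
  obtain ⟨c, hcD, hcount, hclos⟩ :=
    (TopologicalSpace.IsSeparable.of_separableSpace D).exists_countable_dense_subset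
  have hcne : c.Nonempty := by
    rcases hne with ⟨x, hx⟩
    rcases hclos hx with h
    by_contra h'
    rw [not_nonempty_iff_eq_empty] at h'
    simp [h', closure_empty] at h
  obtain ⟨d, hd⟩ := hcount.exists_eq_range hcne
  have hdD : ∀ k, d k ∈ D := fun k => hcD (hd ▸ mem_range_self k)
  have key : ∀ k : ℕ, ∃ v : E →L[ℝ] ℝ, ‖v‖ = 1 ∧ ∀ j ≤ k, 0 ≤ v (d j) := by
    intro k
    set K := convexHull ℝ (d '' Iic k) with hK
    have hKfin : (d '' Iic k).Finite := (Set.finite_Iic k).image d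
    have hKcl : IsClosed K := (hKfin.isCompact_convexHull (𝕜 := ℝ)).isClosed
    have hKconv : Convex ℝ K := convex_convexHull _ _
    have hKD : K ⊆ D := by
      rw [hK, ← hD.convexHull_eq]
      exact convexHull_mono (by rintro y ⟨j, _, rfl⟩; exact hdD j)
    have h0K : (0 : E) ∉ K := fun h => h0 (hKD h)
    obtain ⟨f, u, hfu, hfb⟩ := geometric_hahn_banach_point_closed hKconv hKcl h0K
    have hu : 0 < u := by simpa using hfu
    have hfpos : ∀ j ≤ k, 0 < f (d j) := fun j hj =>
      hu.trans (hfb _ (subset_convexHull _ _ ⟨j, hj, rfl⟩))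
    have hfne : f ≠ 0 := by
      intro h
      have := hfpos 0 (Nat.zero_le k)
      rw [h] at this
      simpa using this
    have hfnorm : ‖f‖ ≠ 0 := norm_ne_zero_iff.2 hfne
    refine ⟨‖f‖⁻¹ • f, ?_, ?_⟩
    · have : ‖‖f‖⁻¹ • f‖ = ‖f‖⁻¹ * ‖f‖ := by
        rw [norm_smul (‖f‖⁻¹) f]; simp
      rw [this, inv_mul_cancel₀ hfnorm]
    · intro j hj
      have : (0:ℝ) ≤ ‖f‖⁻¹ * f (d j) :=
        mul_nonneg (inv_nonneg.2 (norm_nonneg f)) (hfpos j hj).le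
      simpa using this
  choose v hv1 hvpos using key
  have hsph : ∀ k, v k ∈ Metric.sphere (0 : E →L[ℝ] ℝ) 1 := fun k =>
    mem_sphere_zero_iff_norm.2 (hv1 k)
  obtain ⟨L, hLs, φ, hφmono, hφtend⟩ :=
    (isCompact_sphere (0 : E →L[ℝ] ℝ) 1).tendsto_subseq hsph
  have hLne : L ≠ 0 := by
    intro h
    have := mem_sphere_zero_iff_norm.1 hLs
    rw [h] at this; simp at this
  refine ⟨L, hLne, ?_⟩
  have hLd : ∀ j, 0 ≤ L (d j) := by
    intro j
    have htend : Tendsto (fun k => (v (φ k)) (d j)) atTop (𝓝 (L (d j))) :=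
      ((ContinuousLinearMap.apply ℝ ℝ (d j)).continuous.tendsto L).comp hφtend
    refine ge_of_tendsto htend ?_
    filter_upwards [eventually_ge_atTop j] with k hk
    exact hvpos (φ k) j (hk.trans (hφmono.le_apply))
  intro x hx
  have hxcl : x ∈ closure c := hclos hx
  have : closure c ⊆ {y | 0 ≤ L y} := by
    apply closure_minimal _ (isClosed_le continuous_const L.continuous)
    rw [hd]; rintro y ⟨j, rfl⟩; exact hLd j
  exact this hxcl

/-- attained supremum case; there is a maximizing measure with at
most `m+1` support points, supported where the hyperplane touches. -/
theorem supporting_hyperplane_attained {n m : ℕ}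
    (f : (Fin n → ℝ) → Fin m → ℝ) (g : (Fin n → ℝ) → ℝ)
    (hf : ∀ i, Measurable fun x => f x i) (hg : Measurable g)
    (S : Set (Fin n → ℝ)) (φ : Fin m → ℝ) (σp : ℝ)
    (hσ : (⨆ p ∈ gam n m f g S φ, ((p.2 : ℝ) : EReal)) = (σp : EReal))
    (hmem : ((φ, σp) : (Fin m → ℝ) × ℝ) ∈ gam n m f g S φ) :
    ∃ (α : Fin m → ℝ) (β c : ℝ), 0 ≤ β ∧
      ((α, β) : (Fin m → ℝ) × ℝ) ≠ 0 ∧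
      (∀ x ∈ S, (∑ i, α i * f x i) + β * g x + c ≤ 0) ∧
      ∃ μ ∈ MCk n m f g S φ (m + 1),
        (∫ x, g x ∂μ) = σp ∧
        ∀ x ∈ msupport μ, (∑ i, α i * f x i) + β * g x + c = 0 := by
  classical
  set E := ((Fin m → ℝ) × ℝ)
  set Γ : (Fin n → ℝ) → E := fun x => (f x, g x) with hΓ
  set C : Set E := convexHull ℝ (Γ '' S) with hC
  have hCconv : Convex ℝ C := convex_convexHull _ _
  -- every point of gam has second coordinate ≤ σp
  have hbound : ∀ p ∈ gam n m f g S φ, p.2 ≤ σp := by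
    intro p hp
    have h1 : ((p.2 : ℝ) : EReal) ≤ (⨆ p ∈ gam n m f g S φ, ((p.2 : ℝ) : EReal)) :=
      le_iSup₂ (f := fun (p : (Fin m → ℝ) × ℝ) (_ : p ∈ gam n m f g S φ) => ((p.2 : ℝ) : EReal)) p hp
    rw [hσ] at h1
    exact_mod_cast h1
  have hmemC : ((φ, σp) : E) ∈ C := hmem.1
  -- separation
  set R : Set E := {p | p.1 = φ ∧ σp < p.2} with hR
  have hRconv : Convex ℝ R := by
    intro p hp q hq a b ha hb hab
    refine ⟨?_, ?_⟩
    · show (a • p + b • q).1 = φ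
      have : (a • p + b • q).1 = a • p.1 + b • q.1 := rfl
      rw [this, hp.1, hq.1, ← add_smul, hab, one_smul]
    · show σp < (a • p + b • q).2
      have : (a • p + b • q).2 = a * p.2 + b * q.2 := rfl
      rw [this]
      exact (convex_Ioi σp) hp.2 hq.2 ha hb hab
  have hDconv : Convex ℝ (R - C) := hRconv.sub hCconv
  have hDne : (R - C).Nonempty :=
    ⟨((φ, σp + 1) : E) - (φ, σp), Set.sub_mem_sub ⟨rfl, by show σp < σp + 1; linarith⟩ hmemC⟩
  have hD0 : (0 : E) ∉ R - C := by
    rintro h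
    rw [Set.mem_sub] at h
    obtain ⟨r, hr, q, hq, hrq⟩ := h
    have : r = q := by rwa [sub_eq_zero] at hrq
    subst this
    have : r ∈ gam n m f g S φ := ⟨hq, hr.1⟩
    exact absurd (hbound r this) (not_le.2 hr.2)
  obtain ⟨L, hLne, hLpos⟩ := exists_weak_sep hDconv hDne hD0
  -- L q ≤ L r for q ∈ C, r ∈ R
  have hLsep : ∀ q ∈ C, ∀ r ∈ R, L q ≤ L r := by
    intro q hq r hr
    have := hLpos _ (Set.sub_mem_sub hr hq)
    rw [map_sub] at this
    linarith
  set β : ℝ := L (0, 1) with hβ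
  have hβ0 : 0 ≤ β := by
    have h1 : L (φ, σp) ≤ L (φ, σp + 1) := hLsep _ hmemC _ ⟨rfl, by show σp < σp + 1; linarith⟩
    have h2 : ((φ, σp + 1) : E) = (φ, σp) + (1 : ℝ) • ((0 : Fin m → ℝ), (1:ℝ)) := by
      simp [Prod.ext_iff]
    rw [h2, map_add, L.map_smul] at h1
    simp only [smul_eq_mul, one_mul] at h1
    rw [hβ]; linarith
  set c₀ : ℝ := L (φ, σp) with hc₀
  -- every point of C has L ≤ c₀
  have hCle : ∀ q ∈ C, L q ≤ c₀ := by
    intro q hq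
    refine le_of_forall_pos_le_add ?_
    intro ε hε
    set t : ℝ := ε / (β + 1) with ht
    have hβ1 : (0:ℝ) < β + 1 := by linarith
    have htpos : 0 < t := div_pos hε hβ1
    have h1 : L q ≤ L (φ, σp + t) := hLsep _ hq _ ⟨rfl, by show σp < σp + t; linarith⟩
    have h2 : ((φ, σp + t) : E) = (φ, σp) + t • ((0 : Fin m → ℝ), (1:ℝ)) := by
      simp [Prod.ext_iff]
    rw [h2, map_add, L.map_smul] at h1
    have h3 : t * β ≤ ε := by
      rw [ht, div_mul_eq_mul_div, div_le_iff₀ hβ1]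
      nlinarith [mul_le_mul_of_nonneg_left (by linarith : β ≤ β + 1) hε.le]
    simp only [smul_eq_mul] at h1
    calc L q ≤ c₀ + t * β := by rw [hc₀]; linarith
    _ ≤ c₀ + ε := by linarith
  -- decompose L
  set A : (Fin m → ℝ) →ₗ[ℝ] ℝ := (L : E →ₗ[ℝ] ℝ).comp (LinearMap.inl ℝ (Fin m → ℝ) ℝ) with hA
  have hAdef : ∀ y : Fin m → ℝ, A y = L (y, 0) := fun y => rfl
  have hLsplit : ∀ p : E, L p = A p.1 + p.2 * β := by
    intro p
    have h1 : p = ((p.1, 0) : E) + p.2 • ((0 : Fin m → ℝ), (1:ℝ)) := by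
      simp [Prod.ext_iff]
    conv_lhs => rw [h1]
    rw [map_add, L.map_smul]
    simp only [smul_eq_mul]
    rw [← hAdef, ← hβ]
  set α : Fin m → ℝ := fun i => A (fun j => if i = j then 1 else 0) with hα
  have hAsum : ∀ y : Fin m → ℝ, A y = ∑ i, α i * y i := by
    intro y
    rw [A.pi_apply_eq_sum_univ y]
    refine Finset.sum_congr rfl fun i _ => ?_
    show y i • A (fun j => if i = j then 1 else 0) = α i * y i
    rw [hα, smul_eq_mul]
    ring
  -- the linear form evaluated on Γ
  have hform : ∀ x, L (Γ x) = (∑ i, α i * f x i) + β * g x := by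
    intro x
    rw [hLsplit, hAsum]
    show (∑ i, α i * f x i) + g x * β = _
    ring
  set c : ℝ := -c₀ with hcdef
  have hineq : ∀ x ∈ S, (∑ i, α i * f x i) + β * g x + c ≤ 0 := by
    intro x hx
    have : L (Γ x) ≤ c₀ := hCle _ (subset_convexHull _ _ ⟨x, hx, rfl⟩)
    rw [hform] at this
    rw [hcdef]; linarith
  have hαβne : ((α, β) : (Fin m → ℝ) × ℝ) ≠ 0 := by
    intro h
    have hα0 : α = 0 := congrArg Prod.fst h
    have hβz : β = 0 := congrArg Prod.snd h
    apply hLne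
    refine ContinuousLinearMap.ext fun p => ?_
    rw [hLsplit p, hAsum, hα0, hβz]
    simp
  -- Caratheodory representation
  obtain ⟨ι, hιft, z, w, hzS, hindep, hwpos, hwsum, hzsum⟩ :=
    eq_pos_convex_span_of_mem_convexHull hmemC
  have hιne : Nonempty ι := by
    by_contra h
    rw [not_nonempty_iff] at h
    rw [Finset.univ_eq_empty, Finset.sum_empty] at hwsum
    exact one_ne_zero hwsum.symm
  -- all z i lie on the hyperplane
  have hLz : ∀ i, L (z i) = c₀ := by
    have hsum : ∑ i, w i * L (z i) = c₀ := by
      have := congrArg L hzsum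
      rw [map_sum] at this
      simp only [L.map_smul, smul_eq_mul] at this
      rw [this, hc₀]
    have hle : ∀ i, L (z i) ≤ c₀ := fun i =>
      hCle _ (subset_convexHull _ _ (hzS (mem_range_self i)))
    have hzero : ∑ i, w i * (c₀ - L (z i)) = 0 := by
      have h1 : ∑ i, w i * (c₀ - L (z i)) = (∑ i, w i) * c₀ - ∑ i, w i * L (z i) := by
        rw [Finset.sum_mul, ← Finset.sum_sub_distrib]
        exact Finset.sum_congr rfl fun i _ => by ring
      rw [h1, hwsum, hsum]; ring
    intro i
    have := (Finset.sum_eq_zero_iff_of_nonneg (fun i _ =>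
      mul_nonneg (hwpos i).le (by linarith [hle i]))).1 hzero i (Finset.mem_univ i)
    have hwne : w i ≠ 0 := (hwpos i).ne'
    have : c₀ - L (z i) = 0 := by
      rcases mul_eq_zero.1 this with h | h
      · exact absurd h hwne
      · exact h
    linarith
  -- cardinality bound
  have hcard : Fintype.card ι ≤ m + 1 := by
    haveI := hιne
    obtain ⟨i₀⟩ := hιne
    have hli : LinearIndependent ℝ (fun i : {x // x ≠ i₀} => z i -ᵥ z i₀) :=
      (affineIndependent_iff_linearIndependent_vsub ℝ z i₀).1 hindep
    have hker : ∀ i : {x // x ≠ i₀}, (z i - z i₀) ∈ LinearMap.ker (L : E →ₗ[ℝ] ℝ) := by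
      intro i
      rw [LinearMap.mem_ker]
      show L (z i - z i₀) = 0
      rw [map_sub, hLz, hLz, sub_self]
    set v : {x // x ≠ i₀} → LinearMap.ker (L : E →ₗ[ℝ] ℝ) :=
      fun i => ⟨z i - z i₀, hker i⟩ with hv
    have hliv : LinearIndependent ℝ v := by
      apply LinearIndependent.of_comp (LinearMap.ker (L : E →ₗ[ℝ] ℝ)).subtype
      exact hli
    have hrange : LinearMap.range (L : E →ₗ[ℝ] ℝ) = ⊤ := by
      rw [LinearMap.range_eq_top]
      obtain ⟨e, he⟩ := DFunLike.ne_iff.1 hLne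
      intro y
      refine ⟨(y / L e) • e, ?_⟩
      show L _ = y
      have he' : L e ≠ 0 := by simpa using he
      rw [L.map_smul, smul_eq_mul]
      field_simp
    have hfinE : Module.finrank ℝ ((Fin m → ℝ) × ℝ) = m + 1 := by
      rw [Module.finrank_prod]
      simp [Module.finrank_fin_fun]
    have hrank := LinearMap.finrank_range_add_finrank_ker (L : E →ₗ[ℝ] ℝ)
    rw [hrange, finrank_top] at hrank
    have hrr : Module.finrank ℝ ℝ = 1 := Module.finrank_self ℝ
    have hEE : Module.finrank ℝ E = m + 1 := hfinE
    have hfinker : Module.finrank ℝ (LinearMap.ker (L : E →ₗ[ℝ] ℝ)) = m := by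
      rw [hrr, hEE] at hrank
      omega
    have hcard1 : Fintype.card {x // x ≠ i₀} ≤ m := by
      have := hliv.fintype_card_le_finrank
      rwa [hfinker] at this
    have hcard2 : Fintype.card {x // x ≠ i₀} = Fintype.card ι - 1 := by
      have h1 : Fintype.card {x : ι // ¬ x = i₀} = Fintype.card ι - Fintype.card {x : ι // x = i₀} :=
        Fintype.card_subtype_compl _
      rw [Fintype.card_subtype_eq] at h1
      exact h1
    have hpos : 1 ≤ Fintype.card ι := Fintype.card_pos
    omega
  -- extract the points
  have hchoice : ∀ i : ι, ∃ x, x ∈ S ∧ Γ x = z i := by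
    intro i
    obtain ⟨x, hx, hxz⟩ := hzS (mem_range_self i)
    exact ⟨x, hx, hxz⟩
  choose x hxS hxz using hchoice
  have hzinj : Function.Injective z := hindep.injective
  have hxinj : Function.Injective x := by
    intro i j hij
    apply hzinj
    rw [← hxz, ← hxz, hij]
  -- the measure
  set μ : Measure (Fin n → ℝ) := ∑ i : ι, ENNReal.ofReal (w i) • Measure.dirac (x i) with hμ
  have hμapp : ∀ U : Set (Fin n → ℝ),
      μ U = ∑ i : ι, ENNReal.ofReal (w i) * Measure.dirac (x i) U := by
    intro U
    rw [hμ]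
    rw [Measure.coe_finset_sum]
    simp [Measure.smul_apply, smul_eq_mul]
  have hdint : ∀ (h : (Fin n → ℝ) → ℝ), Measurable h → ∀ i : ι,
      Integrable h (ENNReal.ofReal (w i) • Measure.dirac (x i)) := by
    intro h hh i
    refine Integrable.smul_measure ?_ ENNReal.ofReal_ne_top
    refine ⟨hh.aestronglyMeasurable, ?_⟩
    rw [HasFiniteIntegral]
    rw [lintegral_dirac]
    exact ENNReal.coe_lt_top
  have hμint : ∀ (h : (Fin n → ℝ) → ℝ), Measurable h → Integrable h μ := by
    intro h hh
    rw [hμ]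
    exact integrable_finset_sum_measure.2 fun i _ => hdint h hh i
  have hμintegral : ∀ (h : (Fin n → ℝ) → ℝ), Measurable h →
      ∫ y, h y ∂μ = ∑ i : ι, w i * h (x i) := by
    intro h hh
    rw [hμ, integral_finset_sum_measure (fun i _ => hdint h hh i)]
    refine Finset.sum_congr rfl fun i _ => ?_
    rw [integral_smul_measure, integral_dirac, ENNReal.toReal_ofReal (hwpos i).le,
      smul_eq_mul]
  -- components of hzsum
  have hz1 : ∀ j, ∑ i : ι, w i * f (x i) j = φ j := by
    intro j
    have h1 := congrArg Prod.fst hzsum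
    rw [Prod.fst_sum] at h1
    have h2 : ∀ i : ι, (w i • z i).1 = w i • f (x i) := by
      intro i
      rw [← hxz i]
      rfl
    rw [Finset.sum_congr rfl fun i _ => h2 i] at h1
    have h3 := congrFun h1 j
    rw [Finset.sum_apply] at h3
    simpa using h3
  have hz2 : ∑ i : ι, w i * g (x i) = σp := by
    have h1 := congrArg Prod.snd hzsum
    rw [Prod.snd_sum] at h1
    have h2 : ∀ i : ι, (w i • z i).2 = w i * g (x i) := by
      intro i
      rw [← hxz i]
      rfl
    rw [Finset.sum_congr rfl fun i _ => h2 i] at h1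
    exact h1
  -- support
  have hsupp : msupport μ = Set.range x := by
    ext y
    constructor
    · intro hy
      by_contra hyr
      have hUopen : IsOpen ((Set.range x)ᶜ) :=
        (Set.finite_range x).isClosed.isOpen_compl
      have := hy _ hUopen hyr
      apply this
      rw [hμapp]
      refine Finset.sum_eq_zero fun i _ => ?_
      rw [Measure.dirac_apply]
      have : x i ∉ (Set.range x)ᶜ := fun h => h (mem_range_self i)
      rw [Set.indicator_of_notMem this]
      simp
    · rintro ⟨i, rfl⟩ U hU hxU
      rw [hμapp]
      intro hzero
      have hterm : ENNReal.ofReal (w i) * Measure.dirac (x i) U = 0 := by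
        have hle : ENNReal.ofReal (w i) * Measure.dirac (x i) U ≤
            ∑ j : ι, ENNReal.ofReal (w j) * Measure.dirac (x j) U :=
          Finset.single_le_sum (f := fun j => ENNReal.ofReal (w j) * Measure.dirac (x j) U)
            (fun j _ => zero_le) (Finset.mem_univ i)
        rw [hzero] at hle
        exact le_zero_iff.1 hle
      rw [Measure.dirac_apply, Set.indicator_of_mem hxU] at hterm
      simp only [Pi.one_apply, mul_one] at hterm
      rw [ENNReal.ofReal_eq_zero] at hterm
      exact absurd hterm (not_le.2 (hwpos i))
  refine ⟨α, β, c, hβ0, hαβne, hineq, μ, ⟨⟨?_, ?_, ?_, ?_, ?_⟩, ?_⟩, ?_, ?_⟩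
  · -- probability measure
    constructor
    rw [hμapp]
    have h1 : ∀ i : ι, ENNReal.ofReal (w i) * Measure.dirac (x i) Set.univ
        = ENNReal.ofReal (w i) := by
      intro i; simp
    rw [Finset.sum_congr rfl fun i _ => h1 i, ← ENNReal.ofReal_sum_of_nonneg
      (fun i _ => (hwpos i).le), hwsum]
    simp
  · -- support in S
    rw [hsupp]
    rintro y ⟨i, rfl⟩
    exact hxS i
  · exact fun i => hμint _ (hf i)
  · intro i
    rw [hμintegral _ (hf i)]
    exact hz1 i
  · exact hμint _ hg
  · -- cardinality of support
    rw [hsupp]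
    have h1 : (Set.range x).encard = (Fintype.card ι : ℕ∞) := by
      rw [← Set.image_univ, Set.InjOn.encard_image (hxinj.injOn)]
      rw [Set.encard_univ]
      simp [ENat.card_eq_coe_fintype_card]
    rw [h1]
    exact_mod_cast hcard
  · rw [hμintegral _ hg]
    exact hz2
  · intro y hy
    rw [hsupp] at hy
    obtain ⟨i, rfl⟩ := hy
    have h1 : L (Γ (x i)) = c₀ := by rw [hxz i]; exact hLz i
    rw [hform] at h1
    rw [hcdef]
    linarith

end
end
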